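/- arXiv:0802.4312 — 5 statements merged into one kernel-verified Lean document; each statement's English description precedes it below -/
import Mathlib

section
/- Lower semicontinuity of length under Hausdorff convergence: if Γ and Γ_n (n ∈ ℕ) are simple rectifiable curves in ℝⁿ with d_H(Γ_n, Γ) → 0, then H¹(Γ) ≤ liminf_n H¹(Γ_n). -/
open Set Metric Filter MeasureTheory ENNReal Topology

section Aux

variable {X : Type*} [MetricSpace X] [MeasurableSpace X] [BorelSpace X]


lemma conn_lower {K : Set X} (hK : IsPreconnected K) {y z : X} (hy : y ∈ K) (hz : z ∈ K) :
    ENNReal.ofReal (dist y z) ≤ μH[1] K := by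
  set f : X → ℝ := fun p => dist p z with hf
  have hlip : LipschitzWith 1 f := LipschitzWith.dist_left z
  have h1 : μH[1] (f '' K) ≤ μH[1] K := by
    simpa using hlip.hausdorffMeasure_image_le zero_le_one K
  have hconn : IsPreconnected (f '' K) :=
    hK.image f (hlip.continuous.continuousOn)
  have hIcc : Icc (0:ℝ) (dist y z) ⊆ f '' K := by
    have h0 : (0:ℝ) ∈ f '' K := ⟨z, hz, by simp [hf]⟩
    have hd : dist y z ∈ f '' K := ⟨y, hy, rfl⟩
    exact hconn.ordConnected.out h0 hd
  calc ENNReal.ofReal (dist y z) = μH[1] (Icc (0:ℝ) (dist y z)) := by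
        rw [MeasureTheory.hausdorffMeasure_real]; simp [Real.volume_Icc]
    _ ≤ μH[1] (f '' K) := measure_mono hIcc
    _ ≤ μH[1] K := h1

lemma exists_left_piece {γm : ℝ → X} {c s r ε : ℝ} (hcont : ContinuousOn γm (Icc c s))
    (hcs : c ≤ s) {x : X} (hc : r ≤ dist (γm c) x) (hs : dist (γm s) x ≤ ε) (hεr : ε < r) :
    ∃ a, c ≤ a ∧ a < s ∧ γm '' Icc a s ⊆ closedBall x r ∧
      ENNReal.ofReal (r - ε) ≤ μH[1] (γm '' Icc a s) := by
  have hu : ContinuousOn (fun σ => dist (γm σ) x) (Icc c s) :=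
    ((LipschitzWith.dist_left x).continuous.comp_continuousOn hcont)
  set A := {σ ∈ Icc c s | r ≤ dist (γm σ) x} with hA
  have hAsub : A ⊆ Icc c s := fun σ hσ => hσ.1
  have hAne : A.Nonempty := ⟨c, ⟨le_rfl, hcs⟩, hc⟩
  have hAclosed : IsClosed A := by
    have : A = Icc c s ∩ (fun σ => dist (γm σ) x) ⁻¹' Ici r := by
      ext σ; simp [hA, and_comm]
    rw [this]
    exact hu.preimage_isClosed_of_isClosed isClosed_Icc isClosed_Ici
  have hAcomp : IsCompact A := isCompact_Icc.of_isClosed_subset hAclosed hAsub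
  set a := sSup A with ha
  have haA : a ∈ A := hAcomp.sSup_mem hAne
  obtain ⟨⟨hca, has⟩, hra⟩ := haA
  have halt : a < s := by
    rcases lt_or_eq_of_le has with h | h
    · exact h
    · exact absurd ((h ▸ hra).trans hs) (not_le.2 hεr)
  have hlt : ∀ σ ∈ Ioc a s, dist (γm σ) x < r := by
    intro σ hσ
    by_contra h
    push_neg at h
    have : σ ∈ A := ⟨⟨hca.trans hσ.1.le, hσ.2⟩, h⟩
    exact absurd (le_csSup hAcomp.bddAbove this) (not_le.2 hσ.1)
  have hua : dist (γm a) x ≤ r := by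
    by_contra h
    push_neg at h
    have hcont' : ContinuousWithinAt (fun σ => dist (γm σ) x) (Icc c s) a := hu a ⟨hca, has⟩
    have hev : ∀ᶠ σ in 𝓝[Icc c s] a, r < dist (γm σ) x := hcont' (Ioi_mem_nhds h)
    have hmemIoc : Ioc a s ∈ 𝓝[>] a := Ioc_mem_nhdsGT halt
    have hle : 𝓝[>] a ≤ 𝓝[Icc c s] a :=
      nhdsWithin_le_of_mem (mem_of_superset hmemIoc
        (Ioc_subset_Icc_self.trans (Icc_subset_Icc hca le_rfl)))
    obtain ⟨σ, hσr, hσ⟩ := ((hev.filter_mono hle).and (eventually_of_mem hmemIoc fun _ h => h)).exists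
    exact absurd (hlt σ hσ) (not_lt.2 hσr.le)
  refine ⟨a, hca, halt, ?_, ?_⟩
  · rintro _ ⟨σ, hσ, rfl⟩
    rcases eq_or_lt_of_le hσ.1 with h | h
    · rw [← h]; exact mem_closedBall.2 hua
    · exact mem_closedBall.2 (hlt σ ⟨h, hσ.2⟩).le
  · have hconn : IsPreconnected (γm '' Icc a s) :=
      isPreconnected_Icc.image _ (hcont.mono (Icc_subset_Icc hca le_rfl))
    have hmem1 : γm a ∈ γm '' Icc a s := mem_image_of_mem _ ⟨le_rfl, halt.le⟩
    have hmem2 : γm s ∈ γm '' Icc a s := mem_image_of_mem _ ⟨halt.le, le_rfl⟩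
    refine le_trans ?_ (conn_lower hconn hmem1 hmem2)
    apply ENNReal.ofReal_le_ofReal
    have htri := dist_triangle (γm a) (γm s) x
    have hcomm := dist_comm (γm s) x
    linarith


lemma exists_right_piece {γm : ℝ → X} {s d r ε : ℝ} (hcont : ContinuousOn γm (Icc s d))
    (hsd : s ≤ d) {x : X} (hd : r ≤ dist (γm d) x) (hs : dist (γm s) x ≤ ε) (hεr : ε < r) :
    ∃ b, b ≤ d ∧ s < b ∧ γm '' Icc s b ⊆ closedBall x r ∧
      ENNReal.ofReal (r - ε) ≤ μH[1] (γm '' Icc s b) := by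
  set g : ℝ → X := fun σ => γm (s + d - σ) with hgdef
  have hmap : ∀ σ ∈ Icc s d, s + d - σ ∈ Icc s d := by
    intro σ hσ; exact ⟨by linarith [hσ.2], by linarith [hσ.1]⟩
  have hg : ContinuousOn g (Icc s d) :=
    hcont.comp ((continuous_const.sub continuous_id).continuousOn) hmap
  have hgs : dist (g s) x = dist (γm d) x := by simp [hgdef]
  have hgd : dist (g d) x = dist (γm s) x := by simp [hgdef]
  obtain ⟨a, hsa, had, hasub, habd⟩ :=
    exists_left_piece hg hsd (by rw [hgs]; exact hd) (by rw [hgd]; exact hs) hεr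
  have himg : g '' Icc a d = γm '' Icc s (s + d - a) := by
    have : g '' Icc a d = γm '' ((fun σ => s + d - σ) '' Icc a d) := by
      rw [hgdef, ← Set.image_comp]; rfl
    rw [this, Set.image_const_sub_Icc]
    congr 1
    simp
  refine ⟨s + d - a, by linarith, by linarith, ?_, ?_⟩
  · rw [← himg]; exact hasub
  · rw [← himg]; exact habd

lemma ball_est_two {γm : ℝ → X} (hcont : ContinuousOn γm (Icc 0 1)) (hinj : InjOn γm (Icc 0 1))
    {x : X} {r ε s : ℝ} (hs : s ∈ Icc (0:ℝ) 1) (hnear : dist (γm s) x ≤ ε) (hεr : ε < r)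
    (h0 : r ≤ dist (γm 0) x) (h1 : r ≤ dist (γm 1) x) :
    ENNReal.ofReal (r - ε) + ENNReal.ofReal (r - ε) ≤ μH[1] (γm '' Icc 0 1 ∩ closedBall x r) := by
  haveI := MeasureTheory.Measure.noAtoms_hausdorff X one_pos
  obtain ⟨a, ha0, has, hasub, habd⟩ :=
    exists_left_piece (hcont.mono (Icc_subset_Icc le_rfl hs.2)) hs.1 h0 hnear hεr
  obtain ⟨b, hb1, hsb, hbsub, hbbd⟩ :=
    exists_right_piece (hcont.mono (Icc_subset_Icc hs.1 le_rfl)) hs.2 h1 hnear hεr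
  set p1 := γm '' Icc a s with hp1def
  set p2 := γm '' Icc s b with hp2def
  have hIccsub1 : Icc a s ⊆ Icc 0 1 := Icc_subset_Icc ha0 hs.2
  have hIccsub2 : Icc s b ⊆ Icc 0 1 := Icc_subset_Icc hs.1 hb1
  have hint : p1 ∩ p2 = γm '' (Icc a s ∩ Icc s b) := (hinj.image_inter hIccsub1 hIccsub2).symm
  have hint0 : μH[1] (p1 ∩ p2) = 0 := by
    rw [hint, Icc_inter_Icc_eq_singleton has.le hsb.le, Set.image_singleton]
    exact measure_singleton _
  have hmeas2 : MeasurableSet p2 :=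
    (isCompact_Icc.image_of_continuousOn (hcont.mono hIccsub2)).isClosed.measurableSet
  have hp1le : μH[1] p1 ≤ μH[1] (p1 \ p2) := by
    have hsplit : p1 ⊆ (p1 \ p2) ∪ (p1 ∩ p2) := by
      intro y hy; by_cases h : y ∈ p2
      · exact Or.inr ⟨hy, h⟩
      · exact Or.inl ⟨hy, h⟩
    calc μH[1] p1 ≤ μH[1] (p1 \ p2) + μH[1] (p1 ∩ p2) :=
          le_trans (measure_mono hsplit) (measure_union_le _ _)
      _ = μH[1] (p1 \ p2) := by rw [hint0, add_zero]
  have hunion : μH[1] (p1 ∪ p2) = μH[1] (p1 \ p2) + μH[1] p2 := by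
    rw [← measure_union disjoint_sdiff_left hmeas2]
    congr 1
    ext y; by_cases h : y ∈ p2 <;> simp [h]
  have hsubf : p1 ∪ p2 ⊆ γm '' Icc 0 1 ∩ closedBall x r :=
    union_subset (subset_inter (image_mono hIccsub1) hasub)
      (subset_inter (image_mono hIccsub2) hbsub)
  calc ENNReal.ofReal (r-ε) + ENNReal.ofReal (r-ε) ≤ μH[1] p1 + μH[1] p2 := add_le_add habd hbbd
    _ ≤ μH[1] (p1 \ p2) + μH[1] p2 := add_le_add_left hp1le _
    _ = μH[1] (p1 ∪ p2) := hunion.symm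
    _ ≤ _ := measure_mono hsubf

lemma ball_est_one {γm : ℝ → X} (hcont : ContinuousOn γm (Icc 0 1))
    {x : X} {r ε s σ : ℝ} (hs : s ∈ Icc (0:ℝ) 1) (hσ : σ ∈ Icc (0:ℝ) 1)
    (hnear : dist (γm s) x ≤ ε) (hεr : ε < r) (hfar : r ≤ dist (γm σ) x) :
    ENNReal.ofReal (r - ε) ≤ μH[1] (γm '' Icc 0 1 ∩ closedBall x r) := by
  rcases le_or_gt σ s with h | h
  · obtain ⟨a, haσ, has, hasub, habd⟩ :=
      exists_left_piece (hcont.mono (Icc_subset_Icc hσ.1 hs.2)) h hfar hnear hεr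
    exact le_trans habd (measure_mono (subset_inter
      (image_mono (Icc_subset_Icc (hσ.1.trans haσ) hs.2)) hasub))
  · obtain ⟨b, hbσ, hsb, hbsub, hbbd⟩ :=
      exists_right_piece (hcont.mono (Icc_subset_Icc hs.1 hσ.2)) h.le hfar hnear hεr
    exact le_trans hbbd (measure_mono (subset_inter
      (image_mono (Icc_subset_Icc hs.1 (hbσ.trans hσ.2))) hbsub))


lemma family_per_m {γm : ℝ → X} (hc : ContinuousOn γm (Icc 0 1)) (hi : InjOn γm (Icc 0 1))
    {Γm : Set X} (him : γm '' Icc 0 1 = Γm) (hΓmc : IsCompact Γm)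
    {Γ : Set X} {p0 p1 : X} (hp0 : p0 ∈ Γ)
    {F : Finset X} {rf : X → ℝ} {η ε : ℝ}
    (hmem : ∀ x ∈ F, x ∈ Γ ∧ 0 < rf x ∧ rf x < η ∧ rf x < dist x p0 ∧ rf x < dist x p1)
    (hdisj : (F : Set X).PairwiseDisjoint fun x => closedBall x (rf x))
    (hε : ∀ x ∈ F, ε < rf x ∧ ε ≤ dist x p0 - rf x)
    (hε0 : 0 ≤ ε) (hd : hausdorffDist Γm Γ < ε) (hEd : EMetric.hausdorffEdist Γm Γ ≠ ⊤) :
    ∑ x ∈ F, (ENNReal.ofReal (rf x - ε) + ENNReal.ofReal (rf x - ε)) ≤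
      μH[1] Γm + (ENNReal.ofReal η + ENNReal.ofReal η) := by
  -- indicator sums
  have hcard : ∀ z : X, (∑ x ∈ F, if dist z x < rf x then (ENNReal.ofReal η) else 0)
      ≤ ENNReal.ofReal η := by
    intro z
    rw [← Finset.sum_filter, Finset.sum_const]
    have hle1 : (F.filter fun x => dist z x < rf x).card ≤ 1 := by
      apply Finset.card_le_one.2
      intro a ha b hb
      rw [Finset.mem_filter] at ha hb
      by_contra hne
      have hdj := hdisj ha.1 hb.1 hne
      have hza : z ∈ closedBall a (rf a) := mem_closedBall.2 ha.2.le
      have hzb : z ∈ closedBall b (rf b) := mem_closedBall.2 hb.2.le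
      exact Set.disjoint_left.1 hdj hza hzb
    rcases Nat.le_one_iff_eq_zero_or_eq_one.1 hle1 with h | h <;> rw [h] <;> simp
  -- pointwise bound
  have hkey : ∀ x ∈ F, ENNReal.ofReal (rf x - ε) + ENNReal.ofReal (rf x - ε) ≤
      μH[1] (Γm ∩ closedBall x (rf x)) +
        ((if dist (γm 0) x < rf x then (ENNReal.ofReal η) else 0) +
         (if dist (γm 1) x < rf x then (ENNReal.ofReal η) else 0)) := by
    intro x hxF
    obtain ⟨hxΓ, hr0, hrη, _, _⟩ := hmem x hxF
    obtain ⟨hεr, hεd0⟩ := hε x hxF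
    -- near point on Γm
    obtain ⟨y, hyΓm, hyd⟩ := exists_dist_lt_of_hausdorffDist_lt' hxΓ hd hEd
    rw [← him] at hyΓm
    obtain ⟨s, hsIcc, rfl⟩ := hyΓm
    have hnear : dist (γm s) x ≤ ε := hyd.le
    -- far point on Γm (near p0)
    obtain ⟨w, hwΓm, hwd⟩ := exists_dist_lt_of_hausdorffDist_lt' hp0 hd hEd
    rw [← him] at hwΓm
    obtain ⟨σ, hσIcc, rfl⟩ := hwΓm
    have hfar : rf x ≤ dist (γm σ) x := by
      have htri := dist_triangle x (γm σ) p0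
      have h1 : dist x p0 - ε ≤ dist x (γm σ) := by
        have := dist_comm (γm σ) p0
        linarith [htri, hwd]
      rw [dist_comm]
      linarith
    by_cases hunc : rf x ≤ dist (γm 0) x ∧ rf x ≤ dist (γm 1) x
    · refine le_trans (ball_est_two hc hi hsIcc hnear hεr hunc.1 hunc.2) ?_
      rw [him]
      exact le_add_right le_rfl
    · have hone : ENNReal.ofReal (rf x - ε) ≤ μH[1] (Γm ∩ closedBall x (rf x)) := by
        have := ball_est_one hc hsIcc hσIcc hnear hεr hfar
        rwa [him] at this
      have hsmall : ENNReal.ofReal (rf x - ε) ≤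
          ((if dist (γm 0) x < rf x then (ENNReal.ofReal η) else 0) +
           (if dist (γm 1) x < rf x then (ENNReal.ofReal η) else 0)) := by
        rcases not_and_or.1 hunc with h | h
        · rw [if_pos (not_le.1 h)]
          exact le_add_right (ENNReal.ofReal_le_ofReal (by linarith))
        · rw [if_pos (not_le.1 h)]
          exact le_add_left (ENNReal.ofReal_le_ofReal (by linarith))
      exact add_le_add hone hsmall
  -- sum up
  calc ∑ x ∈ F, (ENNReal.ofReal (rf x - ε) + ENNReal.ofReal (rf x - ε))
      ≤ ∑ x ∈ F, (μH[1] (Γm ∩ closedBall x (rf x)) +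
          ((if dist (γm 0) x < rf x then (ENNReal.ofReal η) else 0) +
           (if dist (γm 1) x < rf x then (ENNReal.ofReal η) else 0))) :=
        Finset.sum_le_sum hkey
    _ = (∑ x ∈ F, μH[1] (Γm ∩ closedBall x (rf x))) +
          ((∑ x ∈ F, if dist (γm 0) x < rf x then (ENNReal.ofReal η) else 0) +
           (∑ x ∈ F, if dist (γm 1) x < rf x then (ENNReal.ofReal η) else 0)) := by
        rw [Finset.sum_add_distrib, Finset.sum_add_distrib]
    _ ≤ μH[1] Γm + (ENNReal.ofReal η + ENNReal.ofReal η) := by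
        refine add_le_add ?_ (add_le_add (hcard _) (hcard _))
        rw [← measure_biUnion_finset ?_ ?_]
        · exact measure_mono (iUnion₂_subset fun x _ => inter_subset_left)
        · intro a ha b hb hne
          exact (hdisj ha hb hne).mono inter_subset_right inter_subset_right
        · intro b _
          exact (hΓmc.isClosed.measurableSet).inter measurableSet_closedBall


lemma family_liminf {Γ : Set X} {γ : ℝ → X} (hγim : γ '' Icc 0 1 = Γ) (hΓc : IsCompact Γ)
    {Γs : ℕ → Set X} {γs : ℕ → ℝ → X}
    (hc : ∀ m, ContinuousOn (γs m) (Icc 0 1)) (hi : ∀ m, InjOn (γs m) (Icc 0 1))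
    (him : ∀ m, γs m '' Icc 0 1 = Γs m)
    (hconv : Tendsto (fun m => hausdorffDist (Γs m) Γ) atTop (nhds 0))
    {F : Finset X} {rf : X → ℝ} {η : ℝ}
    (hmem : ∀ x ∈ F, x ∈ Γ ∧ 0 < rf x ∧ rf x < η ∧ rf x < dist x (γ 0) ∧ rf x < dist x (γ 1))
    (hdisj : (F : Set X).PairwiseDisjoint fun x => closedBall x (rf x))
    {βp : ℝ} (hβp : 0 < βp) :
    ∑ x ∈ F, ENNReal.ofReal (2 * rf x) ≤
      Filter.liminf (fun m => μH[1] (Γs m)) atTop + (ENNReal.ofReal η + ENNReal.ofReal η)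
        + ENNReal.ofReal βp := by
  rcases F.eq_empty_or_nonempty with rfl | hFne
  · simp
  have hp0 : γ 0 ∈ Γ := hγim ▸ mem_image_of_mem _ (left_mem_Icc.2 zero_le_one)
  have hΓne : Γ.Nonempty := ⟨γ 0, hp0⟩
  set ε0 := F.inf' hFne (fun x => min (rf x) (dist x (γ 0) - rf x)) with hε0def
  have hε0pos : 0 < ε0 := by
    rw [hε0def, Finset.lt_inf'_iff]
    intro x hx
    obtain ⟨_, h0, _, hd0, _⟩ := hmem x hx
    exact lt_min h0 (by linarith)
  set ε := min (ε0/2) (βp / (2 * F.card + 1)) with hεdef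
  have hεpos : 0 < ε := lt_min (by linarith) (by positivity)
  have hεlt : ∀ x ∈ F, ε < rf x ∧ ε ≤ dist x (γ 0) - rf x := by
    intro x hx
    have h1 : ε0 ≤ min (rf x) (dist x (γ 0) - rf x) := Finset.inf'_le _ hx
    have h2 : ε ≤ ε0 / 2 := min_le_left _ _
    constructor
    · have := le_trans h1 (min_le_left _ _); linarith
    · have := le_trans h1 (min_le_right _ _); linarith
  have hev : ∀ᶠ m in atTop, hausdorffDist (Γs m) Γ < ε := by
    have := hconv (Iio_mem_nhds hεpos)
    simpa [Set.mem_Iio] using this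
  have hper : ∀ᶠ m in atTop,
      (∑ x ∈ F, (ENNReal.ofReal (rf x - ε) + ENNReal.ofReal (rf x - ε))) ≤
        μH[1] (Γs m) + (ENNReal.ofReal η + ENNReal.ofReal η) := by
    filter_upwards [hev] with m hm
    have hΓmc : IsCompact (Γs m) := him m ▸ isCompact_Icc.image_of_continuousOn (hc m)
    have hΓmne : (Γs m).Nonempty :=
      ⟨γs m 0, (him m) ▸ mem_image_of_mem _ (left_mem_Icc.2 zero_le_one)⟩
    have hEd : EMetric.hausdorffEdist (Γs m) Γ ≠ ⊤ :=
      Metric.hausdorffEdist_ne_top_of_nonempty_of_bounded hΓmne hΓne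
        hΓmc.isBounded hΓc.isBounded
    exact family_per_m (hc m) (hi m) (him m) hΓmc hp0 hmem hdisj hεlt hεpos.le hm hEd
  set L := Filter.liminf (fun m => μH[1] (Γs m)) atTop with hL
  set κ := ENNReal.ofReal η + ENNReal.ofReal η with hκ
  have hS : (∑ x ∈ F, (ENNReal.ofReal (rf x - ε) + ENNReal.ofReal (rf x - ε))) ≤ L + κ := by
    rw [← tsub_le_iff_right]
    apply Filter.le_liminf_of_le (by isBoundedDefault)
    filter_upwards [hper] with m hm
    exact tsub_le_iff_right.2 hm
  have hterm : ∀ x ∈ F, ENNReal.ofReal (2 * rf x) ≤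
      (ENNReal.ofReal (rf x - ε) + ENNReal.ofReal (rf x - ε)) + ENNReal.ofReal (2*ε) := by
    intro x hx
    have hεr := (hεlt x hx).1
    rw [← ENNReal.ofReal_add (by linarith) (by linarith),
      ← ENNReal.ofReal_add (by linarith) (by linarith)]
    exact ENNReal.ofReal_le_ofReal (by linarith)
  have hslack : (F.card : ℝ≥0∞) * ENNReal.ofReal (2*ε) ≤ ENNReal.ofReal βp := by
    have hεβ : ε ≤ βp / (2 * F.card + 1) := min_le_right _ _
    have hcard : (0:ℝ) ≤ F.card := Nat.cast_nonneg _
    have : (F.card : ℝ≥0∞) = ENNReal.ofReal (F.card : ℝ) := by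
      simp [ENNReal.ofReal_natCast]
    rw [this, ← ENNReal.ofReal_mul hcard]
    apply ENNReal.ofReal_le_ofReal
    have h2 : (0:ℝ) < 2 * F.card + 1 := by positivity
    nlinarith [(le_div_iff₀ h2).1 hεβ, hεpos.le]
  calc ∑ x ∈ F, ENNReal.ofReal (2 * rf x)
      ≤ ∑ x ∈ F, ((ENNReal.ofReal (rf x - ε) + ENNReal.ofReal (rf x - ε))
          + ENNReal.ofReal (2*ε)) := Finset.sum_le_sum hterm
    _ = (∑ x ∈ F, (ENNReal.ofReal (rf x - ε) + ENNReal.ofReal (rf x - ε)))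
          + F.card • ENNReal.ofReal (2*ε) := by
        rw [Finset.sum_add_distrib, Finset.sum_const]
    _ ≤ (L + κ) + (F.card : ℝ≥0∞) * ENNReal.ofReal (2*ε) := by
        rw [nsmul_eq_mul]
        exact add_le_add_left hS _
    _ ≤ L + κ + ENNReal.ofReal βp := add_le_add_right hslack _


lemma upper_density_null [SecondCountableTopology X] [HasBesicovitchCovering X]
    {A : Set X} (hA : MeasurableSet A) (hfin : μH[1] A < ⊤)
    {η : ℝ} (hη : 0 < η) :
    μH[1] {x ∈ A | ∀ δ > 0, ∃ r ∈ Ioo (0:ℝ) δ,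
      ENNReal.ofReal ((1+η) * (2*r)) ≤ (μH[1]).restrict A (closedBall x r)} = 0 := by
  set ρ := (μH[1] : Measure X).restrict A with hρ
  have hρap : ∀ S : Set X, ρ S = μH[1] (S ∩ A) := fun S => Measure.restrict_apply' hA
  have hρfin : ρ univ < ⊤ := by
    rw [hρap]; exact lt_of_le_of_lt (measure_mono inter_subset_right) hfin
  haveI : IsFiniteMeasure ρ := ⟨hρfin⟩
  set E := {x ∈ A | ∀ δ > 0, ∃ r ∈ Ioo (0:ℝ) δ,
      ENNReal.ofReal ((1+η) * (2*r)) ≤ ρ (closedBall x r)} with hE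
  have hEA : E ⊆ A := fun x hx => hx.1
  have hEfin : μH[1] E < ⊤ := lt_of_le_of_lt (measure_mono hEA) hfin
  have hρE : ρ E ≤ μH[1] E := by
    rw [hρap]; exact measure_mono inter_subset_left
  have hmulne : ENNReal.ofReal (1+η) ≠ 0 := by
    simp only [ne_eq, ENNReal.ofReal_eq_zero, not_le]; linarith
  have hmulnetop : ENNReal.ofReal (1+η) ≠ ⊤ := ENNReal.ofReal_ne_top
  have main : ∀ ε' : ℝ≥0∞, 0 < ε' →
      ENNReal.ofReal (1+η) * μH[1] E ≤ μH[1] E + ε' := by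
    intro ε' hε'
    obtain ⟨U, hEU, hUopen, hUlt⟩ := Set.exists_isOpen_lt_of_lt E (ρ E + ε')
      (ENNReal.lt_add_right (measure_lt_top ρ E).ne hε'.ne')
    set f : X → Set ℝ := fun x => {r | 0 < r ∧
      ENNReal.ofReal ((1+η) * (2*r)) ≤ ρ (closedBall x r) ∧ closedBall x r ⊆ U} with hf
    have hfprop : ∀ x ∈ E, ∀ δ > 0, (f x ∩ Ioo 0 δ).Nonempty := by
      intro x hx δ hδ
      obtain ⟨δU, hδU, hballU⟩ := Metric.isOpen_iff.1 hUopen x (hEU hx)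
      obtain ⟨r, hrIoo, hrd⟩ := hx.2 (min δ δU) (lt_min hδ hδU)
      refine ⟨r, ⟨hrIoo.1, hrd, ?_⟩, hrIoo.1, lt_of_lt_of_le hrIoo.2 (min_le_left _ _)⟩
      exact (closedBall_subset_ball (lt_of_lt_of_le hrIoo.2 (min_le_right _ _))).trans hballU
    have HBes : ∀ k : ℕ, ∃ (t : Set X) (rf : X → ℝ), t.Countable ∧ t ⊆ E ∧
        (∀ x ∈ t, rf x ∈ f x ∩ Ioo 0 (1/(k+1))) ∧
        ρ (E \ ⋃ x ∈ t, closedBall x (rf x)) = 0 ∧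
        t.PairwiseDisjoint fun x => closedBall x (rf x) := fun k =>
      Besicovitch.exists_disjoint_closedBall_covering_ae ρ f E hfprop
        (fun _ => 1/(k+1)) (fun x _ => by positivity)
    choose T R hTcnt hTE hTmem hTnull hTdisj using HBes
    haveI : ∀ k : ℕ, Countable (T k) := fun k => (hTcnt k).to_subtype
    have hnull' : ∀ k, μH[1] (E \ ⋃ x ∈ T k, closedBall x (R k x)) = 0 := by
      intro k
      have hsub : E \ ⋃ x ∈ T k, closedBall x (R k x) ⊆ A := diff_subset.trans hEA
      have heq : μH[1] (E \ ⋃ x ∈ T k, closedBall x (R k x)) =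
          ρ (E \ ⋃ x ∈ T k, closedBall x (R k x)) := by
        rw [hρap, inter_eq_left.2 hsub]
      rw [heq]; exact hTnull k
    set E' := E ∩ ⋂ k : ℕ, ⋃ x ∈ T k, closedBall x (R k x) with hE'
    have hEdiff : μH[1] (E \ E') = 0 := by
      have hsub2 : E \ E' ⊆ ⋃ k : ℕ, (E \ ⋃ x ∈ T k, closedBall x (R k x)) := by
        intro y hy
        rcases hy with ⟨hyE, hyn⟩
        simp only [hE', mem_inter_iff, mem_iInter, not_and, not_forall] at hyn
        obtain ⟨k, hk⟩ := hyn hyE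
        exact mem_iUnion.2 ⟨k, hyE, hk⟩
      exact le_antisymm (le_of_le_of_eq (measure_mono hsub2)
        (measure_iUnion_null fun k => hnull' k)) zero_le
    -- bound on each covering sum
    have hsum : ∀ k : ℕ, (∑' i : T k, EMetric.diam (closedBall (i : X) (R k i)) ^ (1:ℝ))
        ≤ (ρ E + ε') / ENNReal.ofReal (1+η) := by
      intro k
      rw [ENNReal.le_div_iff_mul_le (Or.inl hmulne) (Or.inl hmulnetop)]
      have step1 : (∑' i : T k, EMetric.diam (closedBall (i : X) (R k i)) ^ (1:ℝ))
          ≤ ∑' i : T k, ENNReal.ofReal (2 * R k i) := by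
        apply ENNReal.tsum_le_tsum
        intro i
        rw [ENNReal.rpow_one]
        have h0R : 0 ≤ R k i := (hTmem k i i.2).2.1.le
        calc EMetric.diam (closedBall (i : X) (R k i))
            ≤ 2 * ENNReal.ofReal (R k i) := by
              rw [← Metric.emetric_closedBall h0R]
              exact EMetric.diam_closedBall
          _ = ENNReal.ofReal (2 * R k i) := by
              rw [ENNReal.ofReal_mul (by norm_num : (0:ℝ) ≤ 2)]
              simp [ENNReal.ofReal_ofNat]
      have step2 : ENNReal.ofReal (1+η) * ∑' i : T k, ENNReal.ofReal (2 * R k i)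
          ≤ ρ E + ε' := by
        rw [← ENNReal.tsum_mul_left]
        have : ∀ i : T k, ENNReal.ofReal (1+η) * ENNReal.ofReal (2 * R k i)
            ≤ ρ (closedBall (i : X) (R k i)) := by
          intro i
          rw [← ENNReal.ofReal_mul (by linarith : (0:ℝ) ≤ 1+η)]
          exact ((hTmem k i i.2).1).2.1
        calc (∑' i : T k, ENNReal.ofReal (1+η) * ENNReal.ofReal (2 * R k i))
            ≤ ∑' i : T k, ρ (closedBall (i : X) (R k i)) := ENNReal.tsum_le_tsum this
          _ = ρ (⋃ x ∈ T k, closedBall x (R k x)) :=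
            (measure_biUnion (hTcnt k) (hTdisj k)
              (fun x _ => measurableSet_closedBall)).symm
          _ ≤ ρ U := measure_mono (by
              apply iUnion₂_subset
              intro x hx
              exact ((hTmem k x hx).1).2.2)
          _ ≤ ρ E + ε' := hUlt.le
      calc (∑' i : T k, EMetric.diam (closedBall (i : X) (R k i)) ^ (1:ℝ))
            * ENNReal.ofReal (1+η)
          = ENNReal.ofReal (1+η) * ∑' i : T k, EMetric.diam (closedBall (i:X) (R k i)) ^ (1:ℝ) :=
            mul_comm _ _
        _ ≤ ENNReal.ofReal (1+η) * ∑' i : T k, ENNReal.ofReal (2 * R k i) :=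
            mul_le_mul_right step1 _
        _ ≤ ρ E + ε' := step2
    -- Hausdorff measure bound via coverings
    have hcover : μH[1] E' ≤ (ρ E + ε') / ENNReal.ofReal (1+η) := by
      have hliminf := MeasureTheory.Measure.hausdorffMeasure_le_liminf_tsum (X := X) 1 E'
        (fun k : ℕ => ENNReal.ofReal (2/(k+1)))
        (by
          rw [show (0:ℝ≥0∞) = ENNReal.ofReal 0 by simp]
          apply ENNReal.tendsto_ofReal
          have h2 : Tendsto (fun k : ℕ => 2 * (1/(k+1) : ℝ)) atTop (nhds (2 * 0)) :=
            (tendsto_one_div_add_atTop_nhds_zero_nat).const_mul 2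
          simpa [mul_one_div, div_eq_mul_inv] using h2)
        (fun k (i : T k) => closedBall (i : X) (R k i))
        (by
          filter_upwards with k
          intro i
          have h0R : 0 ≤ R k i := (hTmem k i i.2).2.1.le
          have hRlt : R k i ≤ 1/(k+1) := (hTmem k i i.2).2.2.le
          calc EMetric.diam (closedBall (i : X) (R k i))
              ≤ 2 * ENNReal.ofReal (R k i) := by
                rw [← Metric.emetric_closedBall h0R]
                exact EMetric.diam_closedBall
            _ ≤ ENNReal.ofReal (2/(k+1)) := by
                rw [show (2:ℝ)/(k+1) = 2 * (1/(k+1)) by ring, ENNReal.ofReal_mul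
                  (by norm_num : (0:ℝ) ≤ 2)]
                simp only [ENNReal.ofReal_ofNat]
                exact mul_le_mul_right (ENNReal.ofReal_le_ofReal hRlt) 2)
        (by
          filter_upwards with k
          intro y hy
          have : y ∈ ⋃ x ∈ T k, closedBall x (R k x) := (mem_iInter.1 hy.2) k
          simpa [Set.mem_iUnion] using this)
      refine le_trans hliminf ?_
      refine le_trans (Filter.liminf_le_liminf (Filter.Eventually.of_forall hsum)) ?_
      simp [Filter.liminf_const]
    -- combine
    have hEE' : μH[1] E ≤ μH[1] E' := by
      calc μH[1] E ≤ μH[1] (E' ∪ (E \ E')) := measure_mono (by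
            intro y hy
            by_cases h : y ∈ E'
            · exact Or.inl h
            · exact Or.inr ⟨hy, h⟩)
        _ ≤ μH[1] E' + μH[1] (E \ E') := measure_union_le _ _
        _ = μH[1] E' := by rw [hEdiff, add_zero]
    calc ENNReal.ofReal (1+η) * μH[1] E ≤ ENNReal.ofReal (1+η) * μH[1] E' :=
          mul_le_mul_right hEE' _
      _ ≤ ENNReal.ofReal (1+η) * ((ρ E + ε') / ENNReal.ofReal (1+η)) :=
          mul_le_mul_right hcover _
      _ = ρ E + ε' := ENNReal.mul_div_cancel hmulne hmulnetop
      _ ≤ μH[1] E + ε' := add_le_add_left hρE _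
  -- conclude
  have hle : ENNReal.ofReal (1+η) * μH[1] E ≤ μH[1] E := by
    apply ENNReal.le_of_forall_pos_le_add
    intro ε hεpos hlt
    exact main ε (by exact_mod_cast hεpos) 
  by_contra hne
  have hpos : 0 < μH[1] E := pos_iff_ne_zero.2 hne
  have h1lt : (1:ℝ≥0∞) < ENNReal.ofReal (1+η) := by
    rw [show (1:ℝ≥0∞) = ENNReal.ofReal 1 by simp]
    exact ENNReal.ofReal_lt_ofReal_iff (by linarith) |>.2 (by linarith)
  have : μH[1] E < ENNReal.ofReal (1+η) * μH[1] E := by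
    conv_lhs => rw [← one_mul (μH[1] E)]
    exact ENNReal.mul_lt_mul_left hpos.ne' hEfin.ne h1lt  -- guess name
  exact absurd hle (not_le.2 this)


/-- Main covering estimate: there is a countable disjoint family of small balls centered
away from the endpoints, capturing the full measure up to factor (1+η). -/
lemma main_balls [SecondCountableTopology X] [HasBesicovitchCovering X]
    {Γ : Set X} {γ : ℝ → X} (hγc : ContinuousOn γ (Icc 0 1))
    (hγim : γ '' Icc 0 1 = Γ) (hA : MeasurableSet Γ) (hfin : μH[1] Γ < ⊤)
    {η : ℝ} (hη : 0 < η) :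
    ∃ (T : Set X) (rf : X → ℝ), T.Countable ∧
      (∀ x ∈ T, x ∈ Γ ∧ 0 < rf x ∧ rf x < η ∧ rf x < dist x (γ 0) ∧ rf x < dist x (γ 1)) ∧
      (T.PairwiseDisjoint fun x => closedBall x (rf x)) ∧
      μH[1] Γ ≤ ENNReal.ofReal (1+η) * ∑' x : T, ENNReal.ofReal (2 * rf x) := by
  haveI := MeasureTheory.Measure.noAtoms_hausdorff X one_pos
  set ρ := (μH[1] : Measure X).restrict Γ with hρ
  have hρap : ∀ S : Set X, ρ S = μH[1] (S ∩ Γ) := fun S => Measure.restrict_apply' hA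
  have hρfin : ρ univ < ⊤ := by
    rw [hρap]; exact lt_of_le_of_lt (measure_mono inter_subset_right) hfin
  haveI : IsFiniteMeasure ρ := ⟨hρfin⟩
  set Ebad := {x ∈ Γ | ∀ δ > 0, ∃ r ∈ Ioo (0:ℝ) δ,
      ENNReal.ofReal ((1+η) * (2*r)) ≤ ρ (closedBall x r)} with hEbad
  have hEbadnull : μH[1] Ebad = 0 := upper_density_null hA hfin hη
  set G := Γ \ (Ebad ∪ {γ 0, γ 1}) with hG
  have hGΓ : G ⊆ Γ := diff_subset
  set f : X → Set ℝ := fun x => {r | 0 < r ∧ r < η ∧ r < dist x (γ 0) ∧ r < dist x (γ 1) ∧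
      ρ (closedBall x r) < ENNReal.ofReal ((1+η) * (2*r))} with hf
  have hfprop : ∀ x ∈ G, ∀ δ > 0, (f x ∩ Ioo 0 δ).Nonempty := by
    intro x hx δ hδ
    have hxΓ : x ∈ Γ := hx.1
    have hnb : x ∉ Ebad := fun h => hx.2 (Or.inl h)
    have hne0 : x ≠ γ 0 := fun h => hx.2 (Or.inr (by simp [h]))
    have hne1 : x ≠ γ 1 := fun h => hx.2 (Or.inr (by simp [h]))
    have hd0 : 0 < dist x (γ 0) := dist_pos.2 hne0
    have hd1 : 0 < dist x (γ 1) := dist_pos.2 hne1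
    simp only [hEbad, mem_setOf_eq, not_and, not_forall] at hnb
    obtain ⟨δ0, hδ0pos, hδ0⟩ : ∃ δ0 > 0, ∀ r ∈ Ioo (0:ℝ) δ0,
        ρ (closedBall x r) < ENNReal.ofReal ((1+η) * (2*r)) := by
      have := hnb hxΓ
      push_neg at this
      obtain ⟨δ0, hδ0pos, h⟩ := this
      exact ⟨δ0, hδ0pos, fun r hr => h r hr⟩
    set M := min (min δ (min η δ0)) (min (dist x (γ 0)) (dist x (γ 1))) with hM
    set r := M / 2 with hr
    have hMpos : 0 < M := by positivity
    have hrpos : 0 < r := by positivity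
    have hlt : ∀ b : ℝ, M ≤ b → r < b := by
      intro b hMb
      rw [hr]
      linarith
    refine ⟨r, ⟨hrpos, ?_, ?_, ?_, ?_⟩, hrpos, ?_⟩
    · exact hlt η (le_trans (min_le_left _ _) (le_trans (min_le_right _ _) (min_le_left _ _)))
    · exact hlt _ (le_trans (min_le_right _ _) (min_le_left _ _))
    · exact hlt _ (le_trans (min_le_right _ _) (min_le_right _ _))
    · exact hδ0 r ⟨hrpos, hlt δ0 (le_trans (min_le_left _ _)
        (le_trans (min_le_right _ _) (min_le_right _ _)))⟩
    · exact hlt δ (le_trans (min_le_left _ _) (min_le_left _ _))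
  obtain ⟨T, rf, hTcnt, hTG, hTmem, hTnull, hTdisj⟩ :=
    Besicovitch.exists_disjoint_closedBall_covering_ae ρ f G hfprop (fun _ => 1)
      (fun _ _ => one_pos)
  haveI : Countable T := hTcnt.to_subtype
  refine ⟨T, rf, hTcnt, ?_, hTdisj, ?_⟩
  · intro x hx
    have hm := (hTmem x hx).1
    exact ⟨hGΓ (hTG hx), hm.1, hm.2.1, hm.2.2.1, hm.2.2.2.1⟩
  · -- μH Γ ≤ (1+η) Σ 2r
    have h1 : μH[1] (Γ \ G) = 0 := by
      have hsub : Γ \ G ⊆ Ebad ∪ {γ 0, γ 1} := by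
        intro y hy
        by_contra h
        exact hy.2 ⟨hy.1, h⟩
      refine le_antisymm (le_trans (measure_mono hsub) ?_) zero_le
      calc μH[1] (Ebad ∪ {γ 0, γ 1}) ≤ μH[1] Ebad + μH[1] ({γ 0, γ 1} : Set X) :=
            measure_union_le _ _
        _ ≤ 0 + (μH[1] ({γ 0} : Set X) + μH[1] ({γ 1} : Set X)) := by
            rw [hEbadnull]
            exact add_le_add_right (measure_union_le _ _) _
        _ = 0 := by simp [measure_singleton]
    have h2 : μH[1] (G \ ⋃ x ∈ T, closedBall x (rf x)) = 0 := by
      have hsub : G \ ⋃ x ∈ T, closedBall x (rf x) ⊆ Γ := diff_subset.trans hGΓ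
      have heq : μH[1] (G \ ⋃ x ∈ T, closedBall x (rf x)) =
          ρ (G \ ⋃ x ∈ T, closedBall x (rf x)) := by
        rw [hρap, inter_eq_left.2 hsub]
      rw [heq]; exact hTnull
    have h3 : μH[1] (Γ ∩ ⋃ x ∈ T, closedBall x (rf x)) ≤
        ∑' x : T, ENNReal.ofReal ((1+η) * (2 * rf x)) := by
      rw [inter_iUnion₂]
      refine le_trans (measure_biUnion_le _ hTcnt _) (ENNReal.tsum_le_tsum ?_)
      intro i
      have : μH[1] (Γ ∩ closedBall (i : X) (rf i)) = ρ (closedBall (i : X) (rf i)) := by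
        rw [hρap, inter_comm]
      rw [this]
      exact ((hTmem i i.2).1).2.2.2.2.le
    calc μH[1] Γ ≤ μH[1] (Γ \ G) + μH[1] (G \ ⋃ x ∈ T, closedBall x (rf x)) +
          μH[1] (Γ ∩ ⋃ x ∈ T, closedBall x (rf x)) := by
          refine le_trans (measure_mono ?_) (le_trans (measure_union_le _ _)
            (add_le_add_left (measure_union_le _ _) _))
          intro y hy
          by_cases hyG : y ∈ G
          · by_cases hyU : y ∈ ⋃ x ∈ T, closedBall x (rf x)
            · exact Or.inr ⟨hy, hyU⟩
            · exact Or.inl (Or.inr ⟨hyG, hyU⟩)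
          · exact Or.inl (Or.inl ⟨hy, hyG⟩)
      _ = μH[1] (Γ ∩ ⋃ x ∈ T, closedBall x (rf x)) := by rw [h1, h2]; simp
      _ ≤ ∑' x : T, ENNReal.ofReal ((1+η) * (2 * rf x)) := h3
      _ = ENNReal.ofReal (1+η) * ∑' x : T, ENNReal.ofReal (2 * rf x) := by
          rw [← ENNReal.tsum_mul_left]
          congr 1
          ext i
          rw [← ENNReal.ofReal_mul (by linarith : (0:ℝ) ≤ 1+η)]



end Aux


def IsSimpleRectifiableCurve {n : ℕ} (Γ : Set (EuclideanSpace ℝ (Fin n))) : Prop :=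
  (∃ γ : ℝ → EuclideanSpace ℝ (Fin n),
      ContinuousOn γ (Icc 0 1) ∧ InjOn γ (Icc 0 1) ∧ γ '' Icc 0 1 = Γ) ∧
  μH[1] Γ < ⊤

theorem length_lower_semicontinuous {n : ℕ}
    (Γ : Set (EuclideanSpace ℝ (Fin n))) (hΓ : IsSimpleRectifiableCurve Γ)
    (Γs : ℕ → Set (EuclideanSpace ℝ (Fin n)))
    (hΓs : ∀ m, IsSimpleRectifiableCurve (Γs m))
    (hconv : Tendsto (fun m => hausdorffDist (Γs m) Γ) atTop (nhds 0)) :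
    μH[1] Γ ≤ Filter.liminf (fun m => μH[1] (Γs m)) atTop := by
  obtain ⟨⟨γ, hγc, hγi, hγim⟩, hΓfin⟩ := hΓ
  have hpars := fun m => (hΓs m).1
  choose γs hc hi him using hpars
  have hΓcomp : IsCompact Γ := hγim ▸ isCompact_Icc.image_of_continuousOn hγc
  have hA : MeasurableSet Γ := hΓcomp.isClosed.measurableSet
  set L := Filter.liminf (fun m => μH[1] (Γs m)) atTop with hL
  -- main claim
  have claim : ∀ c : ℝ≥0∞, c < μH[1] Γ → c ≤ L := by
    intro c hc'
    classical
    have hctop : c ≠ ⊤ := (hc'.trans hΓfin).ne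
    set t := (μH[1] Γ).toReal with ht
    have htΓ : μH[1] Γ = ENNReal.ofReal t := (ENNReal.ofReal_toReal hΓfin.ne).symm
    set cr := c.toReal with hcr
    have hcrt : cr < t := by
      rw [hcr, ht]
      exact ENNReal.toReal_lt_toReal hctop hΓfin.ne |>.2 hc'
    have hceq : c = ENNReal.ofReal cr := (ENNReal.ofReal_toReal hctop).symm
    have ht0 : 0 ≤ t := ENNReal.toReal_nonneg
    set g := t - cr with hg
    have hgpos : 0 < g := by rw [hg]; linarith
    set η := min (g/8) (g/(4*(t+1))) with hη
    have hηpos : 0 < η := lt_min (by linarith) (by positivity)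
    have hη8 : η ≤ g/8 := min_le_left _ _
    have hηt : η * (t+1) ≤ g/4 := by
      have h1 : η ≤ g/(4*(t+1)) := min_le_right _ _
      have h2 : (0:ℝ) < 4*(t+1) := by positivity
      calc η * (t+1) ≤ (g/(4*(t+1))) * (t+1) := by nlinarith
        _ = g/4 := by field_simp
    -- get the ball family
    obtain ⟨T, rf, hTcnt, hTmem, hTdisj, hTsum⟩ := main_balls hγc hγim hA hΓfin hηpos
    haveI : Countable T := hTcnt.to_subtype
    set S := ∑' x : T, ENNReal.ofReal (2 * rf x) with hS
    set D := μH[1] Γ / ENNReal.ofReal (1+η) with hD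
    have hone : ENNReal.ofReal (1+η) ≠ 0 := by
      simp only [ne_eq, ENNReal.ofReal_eq_zero, not_le]; linarith
    have honetop : ENNReal.ofReal (1+η) ≠ ⊤ := ENNReal.ofReal_ne_top
    have hDS : D ≤ S :=
      (ENNReal.div_le_iff_le_mul (Or.inl hone) (Or.inl honetop)).2
        (by rw [mul_comm] at hTsum; exact hTsum)
    have hDfin : D < ⊤ := by
      rw [hD]
      exact ENNReal.div_lt_top hΓfin.ne hone
    set β := g/8 with hβ
    have hβpos : 0 < β := by rw [hβ]; linarith
    -- finite subfamily F' with D ≤ ∑_{F'} + β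
    have hfinF : ∃ F' : Finset (EuclideanSpace ℝ (Fin n)),
        (∀ x ∈ F', x ∈ Γ ∧ 0 < rf x ∧ rf x < η ∧ rf x < dist x (γ 0) ∧ rf x < dist x (γ 1)) ∧
        ((F' : Set (EuclideanSpace ℝ (Fin n))).PairwiseDisjoint fun x => closedBall x (rf x)) ∧
        D ≤ (∑ x ∈ F', ENNReal.ofReal (2 * rf x)) + ENNReal.ofReal β := by
      by_cases hDβ : D ≤ ENNReal.ofReal β
      · exact ⟨∅, by simp, by simp, by simpa using hDβ⟩
      · push_neg at hDβ
        have hD0 : D ≠ 0 := fun h => by simp [h] at hDβ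
        have hsub : D - ENNReal.ofReal β < D :=
          ENNReal.sub_lt_self hDfin.ne hD0 (ENNReal.ofReal_pos.2 hβpos).ne'
        have hlt : D - ENNReal.ofReal β < S := lt_of_lt_of_le hsub hDS
        rw [hS, ENNReal.tsum_eq_iSup_sum, lt_iSup_iff] at hlt
        obtain ⟨F, hF⟩ := hlt
        refine ⟨F.image Subtype.val, ?_, ?_, ?_⟩
        · intro x hx
          obtain ⟨i, hiF, hieq⟩ := Finset.mem_image.1 hx
          rw [← hieq]
          exact hTmem i i.2
        · apply hTdisj.subset
          intro x hx
          obtain ⟨i, hiF, hieq⟩ := Finset.mem_image.1 (by exact_mod_cast hx : x ∈ F.image Subtype.val)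
          rw [← hieq]
          exact i.2
        · have hsum_eq : (∑ x ∈ F.image Subtype.val, ENNReal.ofReal (2 * rf x)) =
              ∑ i ∈ F, ENNReal.ofReal (2 * rf (i : EuclideanSpace ℝ (Fin n))) :=
            Finset.sum_image (fun i _ j _ h => Subtype.ext h)
          rw [hsum_eq]
          exact le_of_lt ((ENNReal.sub_lt_iff_lt_right ENNReal.ofReal_ne_top hDβ.le).1 hF)
    obtain ⟨F', hmem', hdisj', hDF⟩ := hfinF
    -- liminf bound
    have hlim := family_liminf hγim hΓcomp hc hi him hconv hmem' hdisj' hβpos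
    -- combine
    set slack := (ENNReal.ofReal η + ENNReal.ofReal η) + ENNReal.ofReal β + ENNReal.ofReal β
      with hslack
    have hDL : D ≤ L + slack := by
      calc D ≤ (∑ x ∈ F', ENNReal.ofReal (2 * rf x)) + ENNReal.ofReal β := hDF
        _ ≤ (L + (ENNReal.ofReal η + ENNReal.ofReal η) + ENNReal.ofReal β)
            + ENNReal.ofReal β := add_le_add_left hlim _
        _ = L + slack := by rw [hslack]; ring
    have hcD : c + slack ≤ D := by
      have h2 : t*η ≤ g/4 := by
        have hid : η*(t+1) = t*η + η := by ring
        linarith [hηpos.le]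
      have h5 : t - t*η ≤ t/(1+η) := by
        rw [le_div_iff₀ (by linarith : (0:ℝ) < 1+η)]
        nlinarith [mul_nonneg (mul_nonneg ht0 hηpos.le) hηpos.le]
      have hreal : cr + (η + η + β + β) ≤ t / (1+η) := by linarith
      have hslackR : slack = ENNReal.ofReal (η + η + β + β) := by
        rw [hslack, ENNReal.ofReal_add (by linarith : (0:ℝ) ≤ η + η + β) hβpos.le,
          ENNReal.ofReal_add (by linarith : (0:ℝ) ≤ η + η) hβpos.le,
          ENNReal.ofReal_add hηpos.le hηpos.le]
      calc c + slack = ENNReal.ofReal cr + ENNReal.ofReal (η + η + β + β) := by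
            rw [← hceq, hslackR]
        _ = ENNReal.ofReal (cr + (η + η + β + β)) :=
            (ENNReal.ofReal_add (by rw [hcr]; exact ENNReal.toReal_nonneg)
              (by linarith)).symm
        _ ≤ ENNReal.ofReal (t / (1+η)) := ENNReal.ofReal_le_ofReal hreal
        _ = ENNReal.ofReal t / ENNReal.ofReal (1+η) :=
          ENNReal.ofReal_div_of_pos (by linarith)
        _ = D := by rw [hD, htΓ]
    have hslacktop : slack ≠ ⊤ := by
      rw [hslack]
      simp [ENNReal.add_ne_top]
    have : c + slack ≤ L + slack := le_trans hcD hDL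
    calc c = c + slack - slack := by
          rw [ENNReal.add_sub_cancel_right hslacktop]
      _ ≤ L + slack - slack := tsub_le_tsub_right this _
      _ = L := by rw [ENNReal.add_sub_cancel_right hslacktop]
  -- conclude
  by_contra hlt
  push_neg at hlt
  obtain ⟨c, hcL, hcΓ⟩ := exists_between hlt
  exact absurd (claim c hcΓ) (not_le.2 hcL)
end

section
/- For every simple rectifiable curve Γ ⊆ ℝⁿ and every ε > 0, there exists δ > 0 such that every simple rectifiable curve Γ' with d_H(Γ, Γ') < δ satisfies H¹(Γ') > H¹(Γ) − ε. -/
open Set Metric Filter MeasureTheory ENNReal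
open scoped Topology NNReal BoundedContinuousFunction

namespace LLSC

variable {n : ℕ}

local notation "E" => EuclideanSpace ℝ (Fin n)

lemma conn_edist_le {S : Set E} (hS : IsPreconnected S) {a b : E} (ha : a ∈ S) (hb : b ∈ S) :
    edist a b ≤ μH[1] S := by
  have hf : LipschitzWith 1 (fun z : E => dist z a) := LipschitzWith.dist_left a
  have h1 : μH[1] ((fun z : E => dist z a) '' S) ≤ μH[1] S := by
    simpa using hf.hausdorffMeasure_image_le (le_of_lt one_pos) S
  have h2 : Icc 0 (dist a b) ⊆ (fun z : E => dist z a) '' S := by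
    have hpc : IsPreconnected ((fun z : E => dist z a) '' S) :=
      hS.image _ ((continuous_id.dist continuous_const).continuousOn)
    have h0 : (0 : ℝ) ∈ (fun z : E => dist z a) '' S := ⟨a, ha, dist_self a⟩
    have hr : dist a b ∈ (fun z : E => dist z a) '' S := ⟨b, hb, dist_comm b a ▸ rfl⟩
    exact hpc.Icc_subset h0 hr
  calc edist a b = μH[1] (Icc 0 (dist a b)) := by
        rw [hausdorffMeasure_real, Real.volume_Icc, sub_zero, edist_dist]
    _ ≤ μH[1] ((fun z : E => dist z a) '' S) := measure_mono h2
    _ ≤ μH[1] S := h1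

lemma hsing (x : E) : μH[1] ({x} : Set E) = 0 := by
  haveI := MeasureTheory.Measure.noAtoms_hausdorff E one_pos
  exact measure_singleton x

lemma arc_compact {γ : ℝ → E} (hcont : ContinuousOn γ (Icc 0 1)) {a b : ℝ}
    (h0 : 0 ≤ a) (h1 : b ≤ 1) : IsCompact (γ '' Icc a b) := by
  rcases le_or_gt a b with hab | hab
  · exact isCompact_Icc.image_of_continuousOn
      (hcont.mono (Icc_subset_Icc h0 h1))
  · simp [Icc_eq_empty_of_lt hab]

lemma arc_add {γ : ℝ → E} (hcont : ContinuousOn γ (Icc 0 1)) (hinj : InjOn γ (Icc 0 1))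
    {a b c : ℝ} (h0 : 0 ≤ a) (hab : a ≤ b) (hbc : b ≤ c) (h1 : c ≤ 1) :
    μH[1] (γ '' Icc a c) = μH[1] (γ '' Icc a b) + μH[1] (γ '' Icc b c) := by
  have hbmem : b ∈ Icc (0:ℝ) 1 := ⟨h0.trans hab, hbc.trans h1⟩
  have himg : γ '' Icc a c = γ '' Icc a b ∪ γ '' Icc b c := by
    rw [← image_union, Icc_union_Icc_eq_Icc hab hbc]
  have hsets : γ '' Icc a b ∪ γ '' Icc b c
      = γ '' Icc a b ∪ (γ '' Icc b c \ {γ b}) := by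
    apply Subset.antisymm
    · rintro x (hx | ⟨t, ht, rfl⟩)
      · exact Or.inl hx
      · by_cases hxb : γ t = γ b
        · exact Or.inl ⟨b, ⟨hab, le_refl b⟩, hxb.symm⟩
        · exact Or.inr ⟨⟨t, ht, rfl⟩, hxb⟩
    · exact union_subset_union_right _ diff_subset
  have hdisj : Disjoint (γ '' Icc a b) (γ '' Icc b c \ {γ b}) := by
    rw [Set.disjoint_left]
    rintro x ⟨s, hs, rfl⟩ ⟨⟨t, ht, hts⟩, hxb⟩
    have hseq : s = t := by
      apply hinj ⟨h0.trans hs.1, (hs.2.trans hbc).trans h1⟩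
        ⟨(h0.trans hab).trans ht.1, ht.2.trans h1⟩ hts.symm
    subst hseq
    have hsb : s = b := le_antisymm hs.2 ht.1
    subst hsb
    exact hxb rfl
  have hm : MeasurableSet (γ '' Icc b c \ {γ b}) :=
    ((arc_compact hcont (h0.trans hab) h1).measurableSet).diff (measurableSet_singleton _)
  rw [himg, hsets, measure_union hdisj hm, measure_diff_null (hsing (γ b))]

lemma arc_edist_le {γ : ℝ → E} (hcont : ContinuousOn γ (Icc 0 1))
    {s t : ℝ} (h0 : 0 ≤ s) (hst : s ≤ t) (h1 : t ≤ 1) :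
    edist (γ s) (γ t) ≤ μH[1] (γ '' Icc s t) := by
  have hsub : Icc s t ⊆ Icc 0 1 := Icc_subset_Icc h0 h1
  exact conn_edist_le (isPreconnected_Icc.image _ (hcont.mono hsub))
    ⟨s, ⟨le_refl _, hst⟩, rfl⟩ ⟨t, ⟨hst, le_refl _⟩, rfl⟩


noncomputable def mcurve (γ : ℝ → E) (t : ℝ) : ℝ := (μH[1] (γ '' Icc 0 t)).toReal

lemma arc_fin {γ : ℝ → E} (hfin : μH[1] (γ '' Icc 0 1) ≠ ⊤)
    {a b : ℝ} (h0 : 0 ≤ a) (h1 : b ≤ 1) : μH[1] (γ '' Icc a b) ≠ ⊤ :=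
  ne_top_of_le_ne_top hfin (measure_mono (Set.image_mono (Icc_subset_Icc h0 h1)))

lemma m_incr {γ : ℝ → E} (hcont : ContinuousOn γ (Icc 0 1)) (hinj : InjOn γ (Icc 0 1))
    (hfin : μH[1] (γ '' Icc 0 1) ≠ ⊤) {s t : ℝ} (h0 : 0 ≤ s) (hst : s ≤ t) (h1 : t ≤ 1) :
    mcurve γ t = mcurve γ s + (μH[1] (γ '' Icc s t)).toReal := by
  unfold mcurve
  rw [arc_add hcont hinj le_rfl h0 hst h1,
    ENNReal.toReal_add (arc_fin hfin le_rfl (hst.trans h1)) (arc_fin hfin h0 h1)]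

lemma dist_le_m {γ : ℝ → E} (hcont : ContinuousOn γ (Icc 0 1)) (hinj : InjOn γ (Icc 0 1))
    (hfin : μH[1] (γ '' Icc 0 1) ≠ ⊤) {s t : ℝ} (hs : s ∈ Icc (0:ℝ) 1) (ht : t ∈ Icc (0:ℝ) 1) :
    dist (γ s) (γ t) ≤ |mcurve γ t - mcurve γ s| := by
  rcases le_total s t with h | h
  · have h1 : edist (γ s) (γ t) ≤ μH[1] (γ '' Icc s t) := arc_edist_le hcont hs.1 h ht.2
    have h2 : dist (γ s) (γ t) ≤ (μH[1] (γ '' Icc s t)).toReal := by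
      rw [dist_edist]
      exact ENNReal.toReal_mono (arc_fin hfin hs.1 ht.2) h1
    have h3 : mcurve γ t - mcurve γ s = (μH[1] (γ '' Icc s t)).toReal := by
      rw [m_incr hcont hinj hfin hs.1 h ht.2]; ring
    calc dist (γ s) (γ t) ≤ (μH[1] (γ '' Icc s t)).toReal := h2
      _ = mcurve γ t - mcurve γ s := h3.symm
      _ ≤ |mcurve γ t - mcurve γ s| := le_abs_self _
  · have h1 : edist (γ t) (γ s) ≤ μH[1] (γ '' Icc t s) := arc_edist_le hcont ht.1 h hs.2
    have h2 : dist (γ s) (γ t) ≤ (μH[1] (γ '' Icc t s)).toReal := by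
      rw [dist_comm, dist_edist]
      exact ENNReal.toReal_mono (arc_fin hfin ht.1 hs.2) h1
    have h3 : mcurve γ s - mcurve γ t = (μH[1] (γ '' Icc t s)).toReal := by
      rw [m_incr hcont hinj hfin ht.1 h hs.2]; ring
    calc dist (γ s) (γ t) ≤ (μH[1] (γ '' Icc t s)).toReal := h2
      _ = mcurve γ s - mcurve γ t := h3.symm
      _ ≤ |mcurve γ t - mcurve γ s| := by rw [abs_sub_comm]; exact le_abs_self _

lemma m_cont {γ : ℝ → E} (hcont : ContinuousOn γ (Icc 0 1)) (hinj : InjOn γ (Icc 0 1))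
    (hfin : μH[1] (γ '' Icc 0 1) ≠ ⊤) : ContinuousOn (mcurve γ) (Icc 0 1) := by
  intro t0 ht0
  rw [Metric.continuousWithinAt_iff]
  intro ε hεpos
  set u : ℕ → ℝ := fun k => 1 / (k + 1) with hu
  have hupos : ∀ k : ℕ, (0:ℝ) < u k := fun k => by positivity
  set A : ℕ → Set E := fun k => γ '' (Icc (t0 - u k) (t0 + u k) ∩ Icc 0 1) with hA
  have hAcpt : ∀ k, IsCompact (A k) := fun k =>
    (isCompact_Icc.inter_right isClosed_Icc).image_of_continuousOn
      (hcont.mono inter_subset_right)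
  have hAm : ∀ k, NullMeasurableSet (A k) μH[1] :=
    fun k => ((hAcpt k).measurableSet).nullMeasurableSet
  have hule : ∀ k l : ℕ, k ≤ l → u l ≤ u k := by
    intro k l hkl
    simp only [hu]
    apply one_div_le_one_div_of_le (by positivity)
    have : (k : ℝ) ≤ l := Nat.cast_le.2 hkl
    linarith
  have hAanti : Antitone A := by
    intro k l hkl
    apply Set.image_mono
    apply inter_subset_inter_left
    apply Icc_subset_Icc
    · linarith [hule k l hkl]
    · linarith [hule k l hkl]
  have hAfin : ∃ k, μH[1] (A k) ≠ ⊤ :=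
    ⟨0, ne_top_of_le_ne_top hfin (measure_mono (Set.image_mono inter_subset_right))⟩
  have hInter : ⋂ k, A k = {γ t0} := by
    apply Subset.antisymm
    · intro x hx
      simp only [mem_iInter] at hx
      have hex : ∀ k, ∃ s, (s ∈ Icc (t0 - u k) (t0 + u k) ∩ Icc 0 1) ∧ γ s = x := fun k => hx k
      choose s hs hγs using hex
      have hlim : Tendsto s atTop (𝓝 t0) := by
        rw [tendsto_iff_dist_tendsto_zero]
        apply squeeze_zero (fun k => dist_nonneg) (fun k => ?_)
          tendsto_one_div_add_atTop_nhds_zero_nat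
        · rw [Real.dist_eq, abs_le]
          constructor
          · linarith [(hs k).1.1]
          · linarith [(hs k).1.2]
      have htend : Tendsto (γ ∘ s) atTop (𝓝 (γ t0)) := by
        apply (hcont t0 ht0).tendsto.comp
        apply tendsto_nhdsWithin_of_tendsto_nhds_of_eventually_within s hlim
        exact Eventually.of_forall fun k => (hs k).2
      have : Tendsto (γ ∘ s) atTop (𝓝 x) := by
        simp only [Function.comp_def, hγs]
        exact tendsto_const_nhds
      exact mem_singleton_iff.2 (tendsto_nhds_unique this htend)
    · intro x hx
      rw [mem_singleton_iff] at hx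
      subst hx
      apply mem_iInter.2
      intro k
      exact ⟨t0, ⟨⟨by linarith [hupos k], by linarith [hupos k]⟩, ht0⟩, rfl⟩
  have htend : Tendsto (fun k => μH[1] (A k)) atTop (𝓝 0) := by
    have := tendsto_measure_iInter_atTop hAm hAanti hAfin
    rwa [hInter, hsing] at this
  have hev : ∀ᶠ k in atTop, μH[1] (A k) < ENNReal.ofReal ε :=
    htend.eventually_lt_const (ENNReal.ofReal_pos.2 hεpos)
  obtain ⟨k, hk⟩ := hev.exists
  refine ⟨u k, hupos k, ?_⟩
  intro t ht hdist
  rw [Real.dist_eq] at hdist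
  have key : ∀ a b : ℝ, a ∈ Icc (0:ℝ) 1 → b ∈ Icc (0:ℝ) 1 → a ≤ b →
      Icc a b ⊆ Icc (t0 - u k) (t0 + u k) → dist (mcurve γ a) (mcurve γ b) < ε := by
    intro a b ha hb hab hsub
    have harc : γ '' Icc a b ⊆ A k := Set.image_mono (subset_inter hsub (Icc_subset_Icc ha.1 hb.2))
    have h1 : (μH[1] (γ '' Icc a b)).toReal ≤ (μH[1] (A k)).toReal :=
      ENNReal.toReal_mono (LT.lt.ne (lt_of_lt_of_le hk le_top)) (measure_mono harc)
    have h2 : (μH[1] (A k)).toReal < ε :=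
      ENNReal.toReal_lt_of_lt_ofReal hk
    have h3 : mcurve γ b = mcurve γ a + (μH[1] (γ '' Icc a b)).toReal :=
      m_incr hcont hinj hfin ha.1 hab hb.2
    rw [Real.dist_eq, h3]
    have heq : mcurve γ a - (mcurve γ a + (μH[1] (γ '' Icc a b)).toReal)
        = -((μH[1] (γ '' Icc a b)).toReal) := by ring
    rw [heq, abs_neg, abs_of_nonneg ENNReal.toReal_nonneg]
    linarith
  rcases le_total t t0 with h | h
  · apply key t t0 ht ht0 h
    intro x hx
    constructor
    · have : t0 - u k ≤ t := by cases' abs_le.1 hdist.le with h1 h2; linarith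
      linarith [hx.1]
    · linarith [hx.2, (hupos k)]
  · rw [dist_comm]
    apply key t0 t ht0 ht h
    intro x hx
    constructor
    · linarith [hx.1, hupos k]
    · have : t ≤ t0 + u k := by cases' abs_le.1 hdist.le with h1 h2; linarith
      linarith [hx.2]


lemma curve_pos {γ : ℝ → E} (hcont : ContinuousOn γ (Icc 0 1)) (hinj : InjOn γ (Icc 0 1)) :
    0 < μH[1] (γ '' Icc 0 1) := by
  have h01 : γ 0 ≠ γ 1 := by
    intro h
    exact zero_ne_one (hinj ⟨le_rfl, zero_le_one⟩ ⟨zero_le_one, le_rfl⟩ h)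
  calc (0:ℝ≥0∞) < edist (γ 0) (γ 1) := by
        simpa [pos_iff_ne_zero, edist_eq_zero] using h01
    _ ≤ μH[1] (γ '' Icc 0 1) := arc_edist_le hcont le_rfl zero_le_one le_rfl

lemma simple_compact_nonempty {S : Set E} (hS : IsSimpleRectifiableCurve S) :
    IsCompact S ∧ S.Nonempty := by
  obtain ⟨⟨γ, hcont, hinj, rfl⟩, hfin⟩ := hS
  exact ⟨isCompact_Icc.image_of_continuousOn hcont,
    ⟨γ 0, ⟨0, ⟨le_rfl, zero_le_one⟩, rfl⟩⟩⟩

lemma exists_param {S : Set E} (hS : IsSimpleRectifiableCurve S) :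
    ∃ f : ℝ → E, LipschitzOnWith (μH[1] S).toReal.toNNReal f (Icc 0 1) ∧ f '' Icc 0 1 = S := by
  obtain ⟨⟨γ, hcont, hinj, rfl⟩, hfin'⟩ := hS
  have hfin : μH[1] (γ '' Icc 0 1) ≠ ⊤ := hfin'.ne
  set M : ℝ := (μH[1] (γ '' Icc 0 1)).toReal with hM
  have hMpos : 0 < M := ENNReal.toReal_pos (curve_pos hcont hinj).ne' hfin
  have hm0 : mcurve γ 0 = 0 := by
    unfold mcurve
    rw [Icc_self, image_singleton, hsing]
    simp
  have hivt : Icc (0:ℝ) M ⊆ mcurve γ '' Icc 0 1 := by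
    have h := intermediate_value_Icc (zero_le_one (α := ℝ)) (m_cont hcont hinj hfin)
    rw [hm0] at h
    exact h
  have hex : ∀ x ∈ Icc (0:ℝ) M, ∃ t, t ∈ Icc (0:ℝ) 1 ∧ mcurve γ t = x := by
    intro x hx
    obtain ⟨t, ht, hmt⟩ := hivt hx
    exact ⟨t, ht, hmt⟩
  choose! g hg1 hg2 using hex
  have hmem : ∀ u ∈ Icc (0:ℝ) 1, M * u ∈ Icc (0:ℝ) M := by
    intro u hu
    constructor
    · exact mul_nonneg hMpos.le hu.1
    · calc M * u ≤ M * 1 := by nlinarith [hu.2]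
        _ = M := mul_one M
  refine ⟨fun u => γ (g (M * u)), ?_, ?_⟩
  · apply LipschitzOnWith.of_dist_le_mul
    intro u hu v hv
    have h1 := dist_le_m hcont hinj hfin (hg1 _ (hmem v hv)) (hg1 _ (hmem u hu))
    rw [hg2 _ (hmem u hu), hg2 _ (hmem v hv)] at h1
    calc dist (γ (g (M * u))) (γ (g (M * v))) ≤ |M * u - M * v| := by
          rwa [dist_comm] at h1
      _ = M * dist u v := by
          rw [Real.dist_eq, ← mul_sub, abs_mul, abs_of_nonneg hMpos.le]
      _ = ((μH[1] (γ '' Icc 0 1)).toReal.toNNReal : ℝ) * dist u v := by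
          rw [Real.coe_toNNReal _ (by rw [← hM]; exact hMpos.le)]
  · apply Subset.antisymm
    · rintro x ⟨u, hu, rfl⟩
      exact ⟨g (M * u), hg1 _ (hmem u hu), rfl⟩
    · rintro x ⟨t, ht, rfl⟩
      have hxm : mcurve γ t ∈ Icc (0:ℝ) M := by
        constructor
        · exact ENNReal.toReal_nonneg
        · exact ENNReal.toReal_mono hfin
            (measure_mono (Set.image_mono (Icc_subset_Icc le_rfl ht.2)))
      refine ⟨mcurve γ t / M, ⟨div_nonneg hxm.1 hMpos.le, (div_le_one hMpos).2 hxm.2⟩, ?_⟩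
      show γ (g (M * (mcurve γ t / M))) = γ t
      rw [mul_comm, div_mul_cancel₀ _ hMpos.ne']
      have h1 : g (mcurve γ t) ∈ Icc (0:ℝ) 1 := hg1 _ hxm
      have h2 : mcurve γ (g (mcurve γ t)) = mcurve γ t := hg2 _ hxm
      have key : ∀ a b : ℝ, a ∈ Icc (0:ℝ) 1 → b ∈ Icc (0:ℝ) 1 → a ≤ b →
          mcurve γ a = mcurve γ b → γ a = γ b := by
        intro a b ha hb hab hmab
        have hinc := m_incr hcont hinj hfin ha.1 hab hb.2
        have harc : (μH[1] (γ '' Icc a b)).toReal = 0 := by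
          rw [← hmab] at hinc; linarith
        have hz : μH[1] (γ '' Icc a b) = 0 := by
          rcases (ENNReal.toReal_eq_zero_iff _).1 harc with h | h
          · exact h
          · exact absurd h (arc_fin hfin ha.1 hb.2)
        have he : edist (γ a) (γ b) = 0 :=
          le_antisymm (le_trans (arc_edist_le hcont ha.1 hab hb.2) hz.le) zero_le
        exact edist_eq_zero.1 he
      rcases le_total (g (mcurve γ t)) t with h | h
      · exact key _ _ h1 ht h h2
      · exact (key _ _ ht h1 h h2.symm).symm

end LLSC

theorem length_lower_semicontinuous_uniform {n : ℕ}
    (Γ : Set (EuclideanSpace ℝ (Fin n))) (hΓ : IsSimpleRectifiableCurve Γ)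
    (ε : ℝ≥0∞) (hε : 0 < ε) :
    ∃ δ > (0 : ℝ), ∀ Γ' : Set (EuclideanSpace ℝ (Fin n)),
      IsSimpleRectifiableCurve Γ' → hausdorffDist Γ Γ' < δ →
      μH[1] Γ - ε < μH[1] Γ' := by
  classical
  by_contra hcon
  push_neg at hcon
  obtain ⟨⟨γ, hγc, hγi, hγim⟩, hfin⟩ := hΓ
  set L := μH[1] Γ with hLdef
  have hLfin : L ≠ ⊤ := hfin.ne
  have hLpos : 0 < L := by rw [hLdef, ← hγim]; exact LLSC.curve_pos hγc hγi
  have hΓcpt : IsCompact Γ := hγim ▸ isCompact_Icc.image_of_continuousOn hγc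
  have hΓne : Γ.Nonempty := hγim ▸ ⟨γ 0, ⟨0, ⟨le_rfl, zero_le_one⟩, rfl⟩⟩
  have hseq : ∀ k : ℕ, ∃ S, IsSimpleRectifiableCurve S ∧
      hausdorffDist Γ S < 1/(k+1) ∧ μH[1] S ≤ L - ε := by
    intro k
    obtain ⟨S, h1, h2, h3⟩ := hcon (1/(k+1)) (by positivity)
    exact ⟨S, h1, h2, h3⟩
  choose S hSsimple hSdist hSle using hseq
  set c : ℝ≥0 := (L - ε).toReal.toNNReal with hc
  have hLεfin : L - ε ≠ ⊤ := ne_top_of_le_ne_top hLfin tsub_le_self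
  have hcL : (c : ℝ≥0∞) = L - ε := by
    have := ENNReal.ofReal_toReal hLεfin
    simpa [ENNReal.ofReal, hc] using this
  have hparam : ∀ k, ∃ f : ℝ → EuclideanSpace ℝ (Fin n),
      LipschitzOnWith c f (Icc 0 1) ∧ f '' Icc 0 1 = S k := by
    intro k
    obtain ⟨f, hf1, hf2⟩ := LLSC.exists_param (hSsimple k)
    refine ⟨f, fun x hx y hy => le_trans (hf1 hx hy) (mul_le_mul_left ?_ _), hf2⟩
    exact ENNReal.coe_le_coe.2 (Real.toNNReal_mono (ENNReal.toReal_mono hLεfin (hSle k)))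
  choose f hflip hfim using hparam
  haveI : CompactSpace (Icc (0:ℝ) 1) := isCompact_iff_compactSpace.1 isCompact_Icc
  have hfc : ∀ k, Continuous (fun x : Icc (0:ℝ) 1 => f k ↑x) :=
    fun k => ((hflip k).continuousOn).restrict
  set F : ℕ → (Icc (0:ℝ) 1 →ᵇ EuclideanSpace ℝ (Fin n)) :=
    fun k => BoundedContinuousFunction.mkOfCompact ⟨fun x : Icc (0:ℝ) 1 => f k ↑x, hfc k⟩ with hF
  set s : Set (EuclideanSpace ℝ (Fin n)) := cthickening 1 Γ with hsdef
  have hscpt : IsCompact s := hΓcpt.cthickening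
  have hSne : ∀ k, (S k).Nonempty := fun k => (LLSC.simple_compact_nonempty (hSsimple k)).2
  have hScpt : ∀ k, IsCompact (S k) := fun k => (LLSC.simple_compact_nonempty (hSsimple k)).1
  have hedist : ∀ k, EMetric.hausdorffEdist Γ (S k) ≤ ENNReal.ofReal (1/(k+1)) := by
    intro k
    have hne : EMetric.hausdorffEdist Γ (S k) ≠ ⊤ :=
      Metric.hausdorffEdist_ne_top_of_nonempty_of_bounded hΓne (hSne k)
        hΓcpt.isBounded (hScpt k).isBounded
    rw [← ENNReal.ofReal_toReal hne]
    exact ENNReal.ofReal_le_ofReal (hSdist k).le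
  have hmems : ∀ k (x : Icc (0:ℝ) 1), F k x ∈ s := by
    intro k x
    have hx : f k ↑x ∈ S k := (hfim k) ▸ mem_image_of_mem _ x.2
    have h1 : EMetric.infEdist (f k ↑x) Γ ≤ Metric.hausdorffEDist (S k) Γ :=
      EMetric.infEdist_le_hausdorffEdist_of_mem hx
    rw [EMetric.hausdorffEdist_comm] at h1
    have hk1 : (1:ℝ)/(k+1) ≤ 1 := by
      rw [div_le_one (by positivity)]
      have : (0:ℝ) ≤ k := Nat.cast_nonneg k
      linarith
    have h2 : EMetric.infEdist (f k ↑x) Γ ≤ ENNReal.ofReal 1 :=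
      le_trans h1 (le_trans (hedist k) (ENNReal.ofReal_le_ofReal hk1))
    rw [hsdef, mem_cthickening_iff]
    exact h2
  set A : Set (Icc (0:ℝ) 1 →ᵇ EuclideanSpace ℝ (Fin n)) :=
    {h | (∀ x y : Icc (0:ℝ) 1, dist (h x) (h y) ≤ (c:ℝ) * dist x y) ∧ ∀ x, h x ∈ s} with hA
  have hFA : ∀ k, F k ∈ A := by
    intro k
    constructor
    · intro x y
      have := (hflip k).dist_le_mul ↑x x.2 ↑y y.2
      simpa [Subtype.dist_eq, F] using this
    · exact hmems k
  have hequi : Equicontinuous ((↑) : A → Icc (0:ℝ) 1 → EuclideanSpace ℝ (Fin n)) := by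
    apply Metric.equicontinuous_of_continuity_modulus (fun d => (c:ℝ) * d)
    · have h : Continuous (fun d : ℝ => (c:ℝ) * d) := continuous_const.mul continuous_id
      simpa using h.tendsto 0
    · rintro x y ⟨h, hh⟩
      exact hh.1 x y
  have hAcl : IsCompact (closure A) :=
    BoundedContinuousFunction.arzela_ascoli s hscpt A (fun h x hh => hh.2 x) hequi
  haveI hfc1 : FirstCountableTopology (Icc (0:ℝ) 1 →ᵇ EuclideanSpace ℝ (Fin n)) :=
    UniformSpace.firstCountableTopology _
  obtain ⟨flim, -, φ, hφ, hconv⟩ := hAcl.tendsto_subseq (fun k => subset_closure (hFA k))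
  have hdistconv : Tendsto (fun k => dist (F (φ k)) flim) atTop (𝓝 0) :=
    tendsto_iff_dist_tendsto_zero.1 hconv
  have hpt : ∀ x : Icc (0:ℝ) 1, Tendsto (fun k => F (φ k) x) atTop (𝓝 (flim x)) := by
    intro x
    rw [tendsto_iff_dist_tendsto_zero]
    exact squeeze_zero (fun k => dist_nonneg)
      (fun k => BoundedContinuousFunction.dist_coe_le_dist x) hdistconv
  have hlim_lip : ∀ x y : Icc (0:ℝ) 1, dist (flim x) (flim y) ≤ (c:ℝ) * dist x y := by
    intro x y
    have h1 : Tendsto (fun k => dist (F (φ k) x) (F (φ k) y)) atTop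
        (𝓝 (dist (flim x) (flim y))) := (hpt x).dist (hpt y)
    exact le_of_tendsto h1 (Eventually.of_forall fun k => (hFA (φ k)).1 x y)
  have hrange : ∀ k, Set.range (⇑(F k)) = S k := by
    intro k
    have h1 : ⇑(F k) = (f k) ∘ (Subtype.val : Icc (0:ℝ) 1 → ℝ) := rfl
    rw [h1, Set.range_comp, Subtype.range_coe, hfim k]
  have hhe : EMetric.hausdorffEdist Γ (Set.range ⇑flim) = 0 := by
    have hb : ∀ k : ℕ, EMetric.hausdorffEdist Γ (Set.range ⇑flim) ≤
        ENNReal.ofReal (1/(φ k+1)) + ENNReal.ofReal (dist (F (φ k)) flim) := by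
      intro k
      have hstep : EMetric.hausdorffEdist (S (φ k)) (Set.range ⇑flim) ≤
          ENNReal.ofReal (dist (F (φ k)) flim) := by
        rw [← hrange (φ k)]
        apply EMetric.hausdorffEdist_le_of_mem_edist
        · rintro x ⟨t, rfl⟩
          refine ⟨flim t, ⟨t, rfl⟩, ?_⟩
          rw [edist_dist]
          exact ENNReal.ofReal_le_ofReal (BoundedContinuousFunction.dist_coe_le_dist t)
        · rintro x ⟨t, rfl⟩
          refine ⟨F (φ k) t, ⟨t, rfl⟩, ?_⟩
          rw [edist_dist, dist_comm]
          exact ENNReal.ofReal_le_ofReal (BoundedContinuousFunction.dist_coe_le_dist t)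
      calc EMetric.hausdorffEdist Γ (Set.range ⇑flim)
          ≤ EMetric.hausdorffEdist Γ (S (φ k)) + EMetric.hausdorffEdist (S (φ k)) (Set.range ⇑flim) :=
            EMetric.hausdorffEdist_triangle
        _ ≤ _ := add_le_add (hedist (φ k)) hstep
    have hlim0 : Tendsto (fun k : ℕ => ENNReal.ofReal (1/(φ k+1)) +
        ENNReal.ofReal (dist (F (φ k)) flim)) atTop (𝓝 0) := by
      have h0 : (0:ℝ≥0∞) = 0 + 0 := by simp
      rw [h0]
      apply Tendsto.add
      · have h1 : Tendsto (fun k : ℕ => 1/((φ k : ℝ)+1)) atTop (𝓝 0) := by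
          have := tendsto_one_div_add_atTop_nhds_zero_nat (𝕜 := ℝ)
          exact this.comp hφ.tendsto_atTop
        simpa using ENNReal.tendsto_ofReal h1
      · simpa using ENNReal.tendsto_ofReal hdistconv
    have hle0 : EMetric.hausdorffEdist Γ (Set.range ⇑flim) ≤ 0 :=
      ge_of_tendsto hlim0 (Eventually.of_forall hb)
    exact le_antisymm hle0 zero_le
  have hrangecl : IsClosed (Set.range ⇑flim) :=
    (isCompact_range flim.continuous).isClosed
  have hΓeq : Γ = Set.range ⇑flim :=
    (EMetric.hausdorffEdist_zero_iff_eq_of_closed hΓcpt.isClosed hrangecl).1 hhe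
  have hlipflim : LipschitzWith c ⇑flim := LipschitzWith.of_dist_le_mul hlim_lip
  have hFlip : LipschitzWith (c * 1) (⇑flim ∘ (projIcc (0:ℝ) 1 zero_le_one)) :=
    hlipflim.comp (LipschitzWith.projIcc zero_le_one)
  have himg : (⇑flim ∘ (projIcc (0:ℝ) 1 zero_le_one)) '' (Icc 0 1) = Set.range ⇑flim := by
    apply Subset.antisymm
    · rintro x ⟨t, ht, rfl⟩
      exact ⟨projIcc (0:ℝ) 1 zero_le_one t, rfl⟩
    · rintro x ⟨t, rfl⟩
      refine ⟨↑t, t.2, ?_⟩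
      simp only [Function.comp_apply, projIcc_val]
  have hmeas : μH[1] Γ ≤ (c:ℝ≥0∞) := by
    calc μH[1] Γ = μH[1] ((⇑flim ∘ (projIcc (0:ℝ) 1 zero_le_one)) '' (Icc 0 1)) := by
          rw [himg, ← hΓeq]
      _ ≤ ((c*1 : ℝ≥0):ℝ≥0∞)^(1:ℝ) * μH[1] (Icc (0:ℝ) 1) :=
          hFlip.hausdorffMeasure_image_le zero_le_one _
      _ = (c:ℝ≥0∞) := by
          rw [hausdorffMeasure_real, Real.volume_Icc]
          simp
  rw [hcL] at hmeas
  exact absurd (lt_of_le_of_lt hmeas (ENNReal.sub_lt_self hLfin hLpos.ne' hε.ne')) (lt_irrefl _)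
end

section
/- Let Γ ⊆ ℝⁿ be a simple rectifiable curve with endpoints p₀, p₁, and for ε > 0 define L(Γ, ε) = inf{ H¹(Γ') : Γ' is a simple rectifiable curve, Γ' ⊆ Γ(ε), p₀, p₁ ∈ Γ' }, where Γ(ε) is the closed ε-neighborhood of Γ. Then lim_{ε → 0⁺} L(Γ, ε) = H¹(Γ). -/
open Set Metric Filter MeasureTheory ENNReal

set_option maxHeartbeats 1000000

variable {n : ℕ}

lemma chord_le_hausdorff {K : Set (EuclideanSpace ℝ (Fin n))} (hK : IsPreconnected K)
    {a b : EuclideanSpace ℝ (Fin n)} (ha : a ∈ K) (hb : b ∈ K) :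
    edist a b ≤ μH[1] K := by
  have hlip : LipschitzWith 1 (fun x : EuclideanSpace ℝ (Fin n) => dist x a) :=
    LipschitzWith.dist_left a
  have himg : IsPreconnected ((fun x => dist x a) '' K) :=
    hK.image _ (hlip.continuous.continuousOn)
  have h0 : (0 : ℝ) ∈ (fun x => dist x a) '' K := ⟨a, ha, by simp⟩
  have hd : dist b a ∈ (fun x => dist x a) '' K := ⟨b, hb, rfl⟩
  have hIcc : Icc (0 : ℝ) (dist b a) ⊆ (fun x => dist x a) '' K :=
    himg.Icc_subset h0 hd
  have h1 : (ENNReal.ofReal (dist b a)) ≤ μH[1] ((fun x => dist x a) '' K) := by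
    calc ENNReal.ofReal (dist b a) = μH[1] (Icc (0:ℝ) (dist b a)) := by
          rw [MeasureTheory.hausdorffMeasure_real]; simp
      _ ≤ μH[1] ((fun x => dist x a) '' K) := measure_mono hIcc
  have h2 : μH[1] ((fun x => dist x a) '' K) ≤ μH[1] K := by
    simpa using hlip.hausdorffMeasure_image_le (by norm_num : (0:ℝ) ≤ 1) K
  rw [edist_dist, dist_comm]
  exact h1.trans h2

lemma chordsum_le_hausdorff {γ : ℝ → EuclideanSpace ℝ (Fin n)}
    (hc : ContinuousOn γ (Icc 0 1)) (hi : InjOn γ (Icc 0 1))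
    {s : ℕ → ℝ} (hs : Monotone s) (hmem : ∀ j, s j ∈ Icc (0:ℝ) 1) (k : ℕ) :
    ∑ j ∈ Finset.range k, edist (γ (s j)) (γ (s (j+1))) ≤ μH[1] (γ '' Icc 0 1) := by
  have hIccsub : ∀ j : ℕ, Icc (s j) (s (j+1)) ⊆ Icc (0:ℝ) 1 := fun j =>
    Icc_subset_Icc (hmem j).1 (hmem (j+1)).2
  -- each subarc compact
  have hcomp : ∀ j : ℕ, IsCompact (γ '' Icc (s j) (s (j+1))) := fun j =>
    (isCompact_Icc).image_of_continuousOn (hc.mono (hIccsub j))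
  -- chord bound on subarc
  have hchord : ∀ j : ℕ, edist (γ (s j)) (γ (s (j+1))) ≤ μH[1] (γ '' Icc (s j) (s (j+1)))
      := by
    intro j
    apply chord_le_hausdorff
    · exact (isPreconnected_Icc).image _ (hc.mono (hIccsub j))
    · exact ⟨s j, ⟨le_rfl, hs (Nat.le_succ j)⟩, rfl⟩
    · exact ⟨s (j+1), ⟨hs (Nat.le_succ j), le_rfl⟩, rfl⟩
  -- half open images
  set T : ℕ → Set (EuclideanSpace ℝ (Fin n)) := fun j => γ '' Ico (s j) (s (j+1)) with hT
  have hTeq : ∀ j : ℕ, T j = (γ '' Icc (s j) (s (j+1))) \ {γ (s (j+1))} := by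
    intro j
    ext x
    constructor
    · rintro ⟨t, ht, rfl⟩
      refine ⟨⟨t, Ico_subset_Icc_self ht, rfl⟩, ?_⟩
      simp only [mem_singleton_iff]
      intro h
      have := hi (hIccsub j (Ico_subset_Icc_self ht)) (hmem (j+1)) h
      exact absurd this (ne_of_lt ht.2)
    · rintro ⟨⟨t, ht, rfl⟩, hne⟩
      refine ⟨t, ⟨ht.1, lt_of_le_of_ne ht.2 ?_⟩, rfl⟩
      intro h; exact hne (by rw [h]; exact rfl)
  have hTmeas : ∀ j : ℕ, MeasurableSet (T j) := fun j => by
    rw [hTeq j]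
    exact ((hcomp j).isClosed.measurableSet).diff (measurableSet_singleton _)
  have hmeasIcoIcc : ∀ j : ℕ, μH[1] (γ '' Icc (s j) (s (j+1))) ≤ μH[1] (T j) := by
    intro j
    have hsub : γ '' Icc (s j) (s (j+1)) ⊆ T j ∪ {γ (s (j+1))} := by
      rintro x ⟨t, ht, rfl⟩
      by_cases h : γ t = γ (s (j+1))
      · exact Or.inr (by simp [h])
      · left
        rw [hTeq j]
        exact ⟨⟨t, ht, rfl⟩, h⟩
    calc μH[1] (γ '' Icc (s j) (s (j+1))) ≤ μH[1] (T j ∪ {γ (s (j+1))}) := measure_mono hsub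
      _ ≤ μH[1] (T j) + μH[1] ({γ (s (j+1))} : Set (EuclideanSpace ℝ (Fin n))) :=
          measure_union_le _ _
      _ = μH[1] (T j) := by
          haveI := MeasureTheory.Measure.noAtoms_hausdorff (EuclideanSpace ℝ (Fin n)) one_pos
          rw [measure_singleton, add_zero]
  -- disjointness
  have hIcodisj : ∀ i j : ℕ, i ≠ j → Disjoint (Ico (s i) (s (i+1))) (Ico (s j) (s (j+1))) := by
    intro i j hij
    rw [Ico_disjoint_Ico]
    rcases lt_or_gt_of_ne hij with h | h
    · calc min (s (i+1)) (s (j+1)) ≤ s (i+1) := min_le_left _ _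
        _ ≤ s j := hs h
        _ ≤ max (s i) (s j) := le_max_right _ _
    · calc min (s (i+1)) (s (j+1)) ≤ s (j+1) := min_le_right _ _
        _ ≤ s i := hs h
        _ ≤ max (s i) (s j) := le_max_left _ _
  have hdisj : (↑(Finset.range k) : Set ℕ).PairwiseDisjoint T := by
    intro i _ j _ hij
    show Disjoint (T i) (T j)
    rw [Set.disjoint_left]
    rintro x ⟨t, ht, rfl⟩ ⟨t', ht', hx⟩
    have htt' : t = t' := hi (hIccsub j (Ico_subset_Icc_self ht'))
        (hIccsub i (Ico_subset_Icc_self ht)) hx |>.symm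
    exact Set.disjoint_left.1 (hIcodisj i j hij) ht (htt' ▸ ht')
  calc ∑ j ∈ Finset.range k, edist (γ (s j)) (γ (s (j+1)))
      ≤ ∑ j ∈ Finset.range k, μH[1] (T j) := by
        refine Finset.sum_le_sum fun j _ => (hchord j).trans (hmeasIcoIcc j)
    _ = μH[1] (⋃ j ∈ Finset.range k, T j) :=
        (measure_biUnion_finset hdisj (fun j _ => hTmeas j)).symm
    _ ≤ μH[1] (γ '' Icc 0 1) := by
        refine measure_mono ?_
        refine Set.iUnion₂_subset fun j _ => ?_
        exact Set.image_mono (fun t ht => hIccsub j (Ico_subset_Icc_self ht))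


lemma hausdorff_le_variation {n : ℕ} {γ : ℝ → EuclideanSpace ℝ (Fin n)} :
    μH[1] (γ '' Icc 0 1) ≤ eVariationOn γ (Icc 0 1) := by
  by_cases hbv : BoundedVariationOn γ (Icc 0 1)
  swap
  · have : eVariationOn γ (Icc 0 1) = ⊤ := by
      by_contra h
      exact hbv h
    rw [this]; exact le_top
  have hlbv : LocallyBoundedVariationOn γ (Icc 0 1) := hbv.locallyBoundedVariationOn
  set φ := variationOnFromTo γ (Icc 0 1) 0 with hφ
  set F := naturalParameterization γ (Icc 0 1) 0 with hF
  have h0 : (0:ℝ) ∈ Icc (0:ℝ) 1 := by norm_num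
  -- γ = F ∘ φ on Icc 0 1
  have heq : ∀ t ∈ Icc (0:ℝ) 1, F (φ t) = γ t := by
    intro t ht
    have := edist_naturalParameterization_eq_zero hlbv h0 ht
    rwa [edist_eq_zero] at this
  have himg : γ '' Icc 0 1 = F '' (φ '' Icc 0 1) := by
    rw [← Set.image_comp]
    exact Set.image_congr (fun t ht => (heq t ht).symm)
  -- F is 1-Lipschitz on φ '' Icc 0 1
  have hunit : HasUnitSpeedOn F (φ '' Icc 0 1) :=
    has_unit_speed_naturalParameterization γ hlbv h0
  have hlip : LipschitzOnWith 1 F (φ '' Icc 0 1) := by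
    intro x hx y hy
    rcases le_total x y with h | h
    · calc edist (F x) (F y) ≤ eVariationOn F (φ '' Icc 0 1 ∩ Icc x y) :=
            eVariationOn.edist_le F ⟨hx, le_rfl, h⟩ ⟨hy, h, le_rfl⟩
        _ = ENNReal.ofReal (1 * (y - x)) := hunit hx hy
        _ ≤ 1 * edist x y := by
            rw [one_mul, one_mul, edist_dist, Real.dist_eq, abs_of_nonpos (by linarith),
              neg_sub]
    · calc edist (F x) (F y) = edist (F y) (F x) := edist_comm _ _
        _ ≤ eVariationOn F (φ '' Icc 0 1 ∩ Icc y x) :=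
            eVariationOn.edist_le F ⟨hy, le_rfl, h⟩ ⟨hx, h, le_rfl⟩
        _ = ENNReal.ofReal (1 * (x - y)) := hunit hy hx
        _ ≤ 1 * edist x y := by
            rw [one_mul, one_mul, edist_dist, Real.dist_eq, abs_of_nonneg (by linarith)]
  -- φ image is within Icc 0 (variation)
  have hφmono : MonotoneOn φ (Icc 0 1) := variationOnFromTo.monotoneOn hlbv h0
  have hφsub : φ '' Icc 0 1 ⊆ Icc (φ 0) (φ 1) := by
    rintro _ ⟨t, ht, rfl⟩
    exact ⟨hφmono h0 ht ht.1, hφmono ht (by norm_num) ht.2⟩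
  calc μH[1] (γ '' Icc 0 1) = μH[1] (F '' (φ '' Icc 0 1)) := by rw [himg]
    _ ≤ 1 * μH[1] (φ '' Icc 0 1) := by
        simpa using hlip.hausdorffMeasure_image_le (by norm_num : (0:ℝ) ≤ 1)
    _ ≤ 1 * μH[1] (Icc (φ 0) (φ 1)) := by
        exact mul_le_mul_right (measure_mono hφsub) 1
    _ = ENNReal.ofReal (φ 1 - φ 0) := by
        rw [one_mul, MeasureTheory.hausdorffMeasure_real, Real.volume_Icc]
    _ ≤ eVariationOn γ (Icc 0 1) := by
        simp only [hφ, variationOnFromTo.self, sub_zero,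
          variationOnFromTo.eq_of_le γ _ zero_le_one]
        rw [Set.inter_self]
        exact ENNReal.ofReal_toReal_le


lemma exists_partition {n : ℕ} {γ : ℝ → EuclideanSpace ℝ (Fin n)}
    {c : ℝ≥0∞} (hcH : c < μH[1] (γ '' Icc 0 1)) :
    ∃ (k : ℕ) (t : ℕ → ℝ), 0 < k ∧ Monotone t ∧ (∀ j, t j ∈ Icc (0:ℝ) 1) ∧ t 0 = 0 ∧
      (∀ j, k ≤ j → t j = 1) ∧
      c < ∑ j ∈ Finset.range k, edist (γ (t j)) (γ (t (j+1))) := by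
  have hvar : c < eVariationOn γ (Icc 0 1) := lt_of_lt_of_le hcH hausdorff_le_variation
  rw [eVariationOn, lt_iSup_iff] at hvar
  obtain ⟨⟨N, u, hu, humem⟩, hsum⟩ := hvar
  set t : ℕ → ℝ := fun j => if j = 0 then 0 else if j ≤ N + 1 then u (j - 1) else 1 with htdef
  have ht0 : t 0 = 0 := by simp [htdef]
  have htmid : ∀ j, 1 ≤ j → j ≤ N + 1 → t j = u (j - 1) := by
    intro j h1 h2
    simp only [htdef]
    rw [if_neg (by omega), if_pos h2]
  have htend : ∀ j, N + 2 ≤ j → t j = 1 := by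
    intro j hj
    simp only [htdef]
    rw [if_neg (by omega), if_neg (by omega)]
  have htmem : ∀ j, t j ∈ Icc (0:ℝ) 1 := by
    intro j
    rcases Nat.eq_zero_or_pos j with h | h
    · rw [h, ht0]; exact ⟨le_rfl, zero_le_one⟩
    rcases le_or_gt j (N+1) with h2 | h2
    · rw [htmid j h h2]; exact humem _
    · rw [htend j (by omega)]; exact ⟨zero_le_one, le_rfl⟩
  have htmono : Monotone t := by
    apply monotone_nat_of_le_succ
    intro j
    rcases Nat.eq_zero_or_pos j with h | h
    · rw [h, ht0]; exact (htmem 1).1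
    rcases le_or_gt (j+1) (N+1) with h2 | h2
    · rw [htmid j h (by omega), htmid (j+1) (by omega) h2]
      have : j - 1 ≤ j + 1 - 1 := by omega
      exact hu this
    rcases le_or_gt j (N+1) with h3 | h3
    · rw [htmid j h h3, htend (j+1) (by omega)]
      exact (humem _).2
    · rw [htend j (by omega), htend (j+1) (by omega)]
  refine ⟨N + 2, t, by omega, htmono, htmem, ht0, fun j hj => htend j hj, ?_⟩
  refine lt_of_lt_of_le hsum ?_
  have hreindex : ∑ i ∈ Finset.range N, edist (γ (u (i+1))) (γ (u i)) =
      ∑ j ∈ Finset.Ico 1 (N+1), edist (γ (t j)) (γ (t (j+1))) := by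
    rw [Finset.sum_Ico_eq_sum_range]
    simp only [Nat.add_sub_cancel]
    apply Finset.sum_congr rfl
    intro i hi
    rw [Finset.mem_range] at hi
    rw [htmid (1+i) (by omega) (by omega), htmid (1+i+1) (by omega) (by omega)]
    have e1 : 1 + i - 1 = i := by omega
    have e2 : 1 + i + 1 - 1 = i + 1 := by omega
    rw [e1, e2, edist_comm]
  rw [hreindex]
  apply Finset.sum_le_sum_of_subset
  intro j hj
  rw [Finset.mem_Ico] at hj
  rw [Finset.mem_range]
  omega


-- modulus of injectivity
lemma inj_modulus {n : ℕ} {γ : ℝ → EuclideanSpace ℝ (Fin n)}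
    (hc : ContinuousOn γ (Icc 0 1)) (hi : InjOn γ (Icc 0 1)) {τ : ℝ} (hτ : 0 < τ) :
    ∃ m > 0, ∀ u ∈ Icc (0:ℝ) 1, ∀ v ∈ Icc (0:ℝ) 1, τ ≤ |u - v| → m ≤ dist (γ u) (γ v) := by
  set P : Set (ℝ × ℝ) := {p | p.1 ∈ Icc (0:ℝ) 1 ∧ p.2 ∈ Icc (0:ℝ) 1 ∧ τ ≤ |p.1 - p.2|} with hP
  rcases eq_empty_or_nonempty P with hPe | hPne
  · refine ⟨1, one_pos, fun u hu v hv huv => ?_⟩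
    exact absurd (show (u, v) ∈ P from ⟨hu, hv, huv⟩) (by rw [hPe]; exact notMem_empty _)
  have hPclosed : IsClosed P := by
    apply IsClosed.inter (isClosed_Icc.preimage continuous_fst)
    apply IsClosed.inter (isClosed_Icc.preimage continuous_snd)
    exact isClosed_le continuous_const ((continuous_fst.sub continuous_snd).abs)
  have hPcomp : IsCompact P :=
    (isCompact_Icc.prod isCompact_Icc).of_isClosed_subset hPclosed
      (fun p hp => ⟨hp.1, hp.2.1⟩)
  have hg : ContinuousOn (fun p : ℝ × ℝ => dist (γ p.1) (γ p.2)) P :=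
    continuous_dist.comp_continuousOn (f := fun p : ℝ × ℝ => (γ p.1, γ p.2))
      (ContinuousOn.prodMk (hc.comp continuousOn_fst (fun p (hp : p ∈ P) => hp.1))
        (hc.comp continuousOn_snd (fun p (hp : p ∈ P) => hp.2.1)))
  obtain ⟨p0, hp0, hmin⟩ := hPcomp.exists_isMinOn hPne hg
  refine ⟨dist (γ p0.1) (γ p0.2), ?_, fun u hu v hv huv => isMinOn_iff.1 hmin (u, v) ⟨hu, hv, huv⟩⟩
  rcases eq_or_lt_of_le (dist_nonneg : (0:ℝ) ≤ dist (γ p0.1) (γ p0.2)) with h | h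
  · exfalso
    have hγeq : γ p0.1 = γ p0.2 := by rw [← dist_eq_zero]; exact h.symm
    have hpeq : p0.1 = p0.2 := hi hp0.1 hp0.2.1 hγeq
    have h22 := hp0.2.2
    rw [hpeq, sub_self, abs_zero] at h22
    linarith
  · exact h

lemma separation_lemma {n : ℕ} {γ : ℝ → EuclideanSpace ℝ (Fin n)}
    (hc : ContinuousOn γ (Icc 0 1)) (hi : InjOn γ (Icc 0 1)) {r : ℝ} (hr : 0 < r) :
    ∃ e > 0, ∀ ε : ℝ, 0 < ε → ε ≤ e →
      ∀ K : Set (EuclideanSpace ℝ (Fin n)), IsPreconnected K →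
        K ⊆ cthickening ε (γ '' Icc 0 1) →
      ∀ u s v : ℝ, u ∈ Icc (0:ℝ) 1 → s ∈ Icc (0:ℝ) 1 → v ∈ Icc (0:ℝ) 1 → u ≤ s → s ≤ v →
      ∀ yu ∈ K, ∀ yv ∈ K, dist yu (γ u) ≤ e → dist yv (γ v) ≤ e →
      ∃ y ∈ K, dist y (γ s) ≤ r := by
  -- uniform continuity modulus
  obtain ⟨δ, hδpos, hδ⟩ := (Metric.uniformContinuousOn_iff.1
    (isCompact_Icc.uniformContinuousOn_of_continuous hc)) (r/2) (by linarith)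
  set τ := δ/4 with hτdef
  have hτ : 0 < τ := by positivity
  obtain ⟨m0, hm0, hmod⟩ := inj_modulus hc hi hτ
  set m := min m0 (r/2) with hm
  have hmpos : 0 < m := lt_min hm0 (by linarith)
  have hmr : m ≤ r/2 := min_le_right _ _
  have hmod' : ∀ u ∈ Icc (0:ℝ) 1, ∀ v ∈ Icc (0:ℝ) 1, τ ≤ |u - v| → m ≤ dist (γ u) (γ v) :=
    fun u hu v hv huv => le_trans (min_le_left _ _) (hmod u hu v hv huv)
  refine ⟨m/8, by positivity, fun ε hε hεe K hK hKsub u s v hu hs hv hus hsv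
    yu hyu yv hyv hyud hyvd => ?_⟩
  -- the compact curve
  have hΓcomp : IsCompact (γ '' Icc 0 1) := isCompact_Icc.image_of_continuousOn hc
  have hΓne : (γ '' Icc 0 1).Nonempty := ⟨γ 0, 0, by norm_num, rfl⟩
  -- every point of K is ε-close to some γ t
  have hwit : ∀ y ∈ K, ∃ t ∈ Icc (0:ℝ) 1, dist y (γ t) ≤ ε := by
    intro y hy
    have hmem := hKsub hy
    rw [Metric.mem_cthickening_iff] at hmem
    obtain ⟨z, hz, hzd⟩ := hΓcomp.exists_infEdist_eq_edist hΓne y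
    obtain ⟨t, ht, rfl⟩ := hz
    refine ⟨t, ht, ?_⟩
    have h2 : edist y (γ t) ≤ ENNReal.ofReal ε := hzd ▸ hmem
    rw [edist_dist] at h2
    exact (ENNReal.ofReal_le_ofReal_iff hε.le).1 h2
  -- easy case: s close to u
  by_cases hcase1 : s - u ≤ 2*τ
  · refine ⟨yu, hyu, ?_⟩
    have h1 : dist (γ u) (γ s) ≤ r/2 := by
      have := hδ u hu s hs (by rw [Real.dist_eq, abs_of_nonpos (by linarith)]; linarith)
      linarith
    calc dist yu (γ s) ≤ dist yu (γ u) + dist (γ u) (γ s) := dist_triangle _ _ _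
      _ ≤ m/8 + r/2 := by linarith
      _ ≤ r := by linarith
  by_cases hcase2 : v - s ≤ 2*τ
  · refine ⟨yv, hyv, ?_⟩
    have h1 : dist (γ v) (γ s) ≤ r/2 := by
      have := hδ v hv s hs (by rw [Real.dist_eq, abs_of_nonneg (by linarith)]; linarith)
      linarith
    calc dist yv (γ s) ≤ dist yv (γ v) + dist (γ v) (γ s) := dist_triangle _ _ _
      _ ≤ m/8 + r/2 := by linarith
      _ ≤ r := by linarith
  push_neg at hcase1 hcase2
  -- main case
  by_contra hcon
  push_neg at hcon
  set A : Set (EuclideanSpace ℝ (Fin n)) := {y | infDist y (γ '' Icc 0 (s - τ)) < m/4} with hA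
  set B : Set (EuclideanSpace ℝ (Fin n)) := {y | infDist y (γ '' Icc (s + τ) 1) < m/4} with hB
  have hsub1 : Icc (0:ℝ) (s - τ) ⊆ Icc 0 1 := Icc_subset_Icc le_rfl (by linarith [hs.2])
  have hsub2 : Icc (s + τ) 1 ⊆ Icc (0:ℝ) 1 := Icc_subset_Icc (by linarith [hs.1]) le_rfl
  have hAopen : IsOpen A := isOpen_lt (continuous_infDist_pt _) continuous_const
  have hBopen : IsOpen B := isOpen_lt (continuous_infDist_pt _) continuous_const
  have hcover : K ⊆ A ∪ B := by
    intro y hy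
    obtain ⟨t, ht, htd⟩ := hwit y hy
    have hyfar : r < dist y (γ s) := hcon y hy
    have hts : 2*τ < |t - s| := by
      by_contra h
      push_neg at h
      have h1 : dist (γ t) (γ s) < r/2 :=
        hδ t ht s hs (by rw [Real.dist_eq]; linarith [hδpos])
      have := dist_triangle y (γ t) (γ s)
      have : dist y (γ s) ≤ ε + r/2 := by linarith
      have hεsmall : ε ≤ m/8 := hεe
      linarith
    rcases lt_or_ge t s with htlt | htge
    · left
      have ht2 : t ∈ Icc (0:ℝ) (s - τ) := by
        refine ⟨ht.1, ?_⟩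
        have habs : |t - s| = s - t := by rw [abs_sub_comm]; exact abs_of_pos (by linarith)
        rw [habs] at hts
        linarith
      show infDist y (γ '' Icc 0 (s - τ)) < m/4
      calc infDist y (γ '' Icc 0 (s - τ)) ≤ dist y (γ t) :=
            infDist_le_dist_of_mem ⟨t, ht2, rfl⟩
        _ ≤ ε := htd
        _ < m/4 := by linarith
    · right
      have ht2 : t ∈ Icc (s + τ) 1 := by
        refine ⟨?_, ht.2⟩
        have habs : |t - s| = t - s := abs_of_nonneg (by linarith)
        rw [habs] at hts
        linarith
      show infDist y (γ '' Icc (s + τ) 1) < m/4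
      calc infDist y (γ '' Icc (s + τ) 1) ≤ dist y (γ t) :=
            infDist_le_dist_of_mem ⟨t, ht2, rfl⟩
        _ ≤ ε := htd
        _ < m/4 := by linarith
  have hyuA : yu ∈ A := by
    show infDist yu (γ '' Icc 0 (s - τ)) < m/4
    have hu2 : u ∈ Icc (0:ℝ) (s - τ) := ⟨hu.1, by linarith⟩
    calc infDist yu (γ '' Icc 0 (s - τ)) ≤ dist yu (γ u) := infDist_le_dist_of_mem ⟨u, hu2, rfl⟩
      _ ≤ m/8 := hyud
      _ < m/4 := by linarith
  have hyvB : yv ∈ B := by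
    show infDist yv (γ '' Icc (s + τ) 1) < m/4
    have hv2 : v ∈ Icc (s + τ) 1 := ⟨by linarith, hv.2⟩
    calc infDist yv (γ '' Icc (s + τ) 1) ≤ dist yv (γ v) := infDist_le_dist_of_mem ⟨v, hv2, rfl⟩
      _ ≤ m/8 := hyvd
      _ < m/4 := by linarith
  obtain ⟨y, hyK, hyA, hyB⟩ := hK A B hAopen hBopen hcover ⟨yu, hyu, hyuA⟩ ⟨yv, hyv, hyvB⟩
  -- contradiction from disjointness
  have hc1 : IsCompact (γ '' Icc 0 (s - τ)) :=
    isCompact_Icc.image_of_continuousOn (hc.mono hsub1)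
  have hc2 : IsCompact (γ '' Icc (s + τ) 1) :=
    isCompact_Icc.image_of_continuousOn (hc.mono hsub2)
  have hne1 : (γ '' Icc 0 (s - τ)).Nonempty := ⟨γ 0, 0, ⟨le_rfl, by linarith [hu.1]⟩, rfl⟩
  have hne2 : (γ '' Icc (s + τ) 1).Nonempty := ⟨γ 1, 1, ⟨by linarith [hv.2], le_rfl⟩, rfl⟩
  obtain ⟨z1, hz1, hz1d⟩ := hc1.exists_infDist_eq_dist hne1 y
  obtain ⟨z2, hz2, hz2d⟩ := hc2.exists_infDist_eq_dist hne2 y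
  obtain ⟨t1, ht1, rfl⟩ := hz1
  obtain ⟨t2, ht2, rfl⟩ := hz2
  have hd1 : dist y (γ t1) < m/4 := by rw [← hz1d]; exact hyA
  have hd2 : dist y (γ t2) < m/4 := by rw [← hz2d]; exact hyB
  have htt : τ ≤ |t1 - t2| := by
    have : t1 ≤ s - τ := ht1.2
    have : s + τ ≤ t2 := ht2.1
    rw [abs_of_nonpos (by linarith)]
    linarith
  have := hmod' t1 (hsub1 ht1) t2 (hsub2 ht2) htt
  have := dist_triangle (γ t1) y (γ t2)
  rw [dist_comm (γ t1) y] at this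
  linarith


lemma reparam_ordered {n : ℕ} {γ' : ℝ → EuclideanSpace ℝ (Fin n)}
    (hc : ContinuousOn γ' (Icc 0 1)) (hi : InjOn γ' (Icc 0 1))
    {p q : EuclideanSpace ℝ (Fin n)} (hp : p ∈ γ' '' Icc 0 1) (hq : q ∈ γ' '' Icc 0 1) :
    ∃ (δ : ℝ → EuclideanSpace ℝ (Fin n)) (a b : ℝ),
      ContinuousOn δ (Icc 0 1) ∧ InjOn δ (Icc 0 1) ∧ δ '' Icc 0 1 = γ' '' Icc 0 1 ∧
      a ∈ Icc (0:ℝ) 1 ∧ b ∈ Icc (0:ℝ) 1 ∧ a ≤ b ∧ δ a = p ∧ δ b = q := by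
  obtain ⟨a', ha', rfl⟩ := hp
  obtain ⟨b', hb', rfl⟩ := hq
  rcases le_total a' b' with h | h
  · exact ⟨γ', a', b', hc, hi, rfl, ha', hb', h, rfl, rfl⟩
  · refine ⟨γ' ∘ (fun t => 1 - t), 1 - a', 1 - b', ?_, ?_, ?_, ?_, ?_, ?_, ?_, ?_⟩
    · apply hc.comp (Continuous.continuousOn (by continuity))
      intro t ht
      have : (1:ℝ) - t ∈ Icc (0:ℝ) 1 := ⟨by linarith [ht.2], by linarith [ht.1]⟩
      simpa using this
    · intro x hx y hy hxy
      have h1 : (1:ℝ) - x ∈ Icc (0:ℝ) 1 := ⟨by linarith [hx.2], by linarith [hx.1]⟩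
      have h2 : (1:ℝ) - y ∈ Icc (0:ℝ) 1 := ⟨by linarith [hy.2], by linarith [hy.1]⟩
      have := hi h1 h2 hxy
      linarith
    · rw [Set.image_comp]
      have himg : (fun t : ℝ => 1 - t) '' Icc 0 1 = Icc (0:ℝ) 1 := by
        ext x
        constructor
        · rintro ⟨t, ht, rfl⟩
          simp only
          exact ⟨by linarith [ht.2], by linarith [ht.1]⟩
        · intro hx; exact ⟨1 - x, ⟨by linarith [hx.2], by linarith [hx.1]⟩, by ring⟩
      rw [himg]
    · exact ⟨by linarith [ha'.2], by linarith [ha'.1]⟩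
    · exact ⟨by linarith [hb'.2], by linarith [hb'.1]⟩
    · linarith
    · show γ' (1 - (1 - a')) = γ' a'; norm_num
    · show γ' (1 - (1 - b')) = γ' b'; norm_num


lemma lower_bound {n : ℕ} {γ : ℝ → EuclideanSpace ℝ (Fin n)}
    (hc : ContinuousOn γ (Icc 0 1)) (hi : InjOn γ (Icc 0 1))
    {c0 : ℝ≥0∞} (hc0 : c0 < μH[1] (γ '' Icc 0 1)) :
    ∃ e > 0, ∀ ε : ℝ, 0 < ε → ε ≤ e →
      ∀ γ2 : ℝ → EuclideanSpace ℝ (Fin n), ContinuousOn γ2 (Icc 0 1) →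
        InjOn γ2 (Icc 0 1) → (γ2 '' Icc 0 1) ⊆ cthickening ε (γ '' Icc 0 1) →
        γ 0 ∈ γ2 '' Icc 0 1 → γ 1 ∈ γ2 '' Icc 0 1 →
        c0 < μH[1] (γ2 '' Icc 0 1) := by
  obtain ⟨c, hc0c, hcH⟩ := exists_between hc0
  obtain ⟨k, t, hk, htmono, htmem, ht0, htend, hbig⟩ := exists_partition hcH
  -- k = N + 2 form not assumed; define N := k - 1 as "last index needing separation"
  -- choose r
  have hctop : c < ⊤ := lt_of_lt_of_le hcH le_top
  have hdpos : (0:ℝ≥0∞) < c - c0 := tsub_pos_of_lt hc0c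
  have hdtop : c - c0 < ⊤ := lt_of_le_of_lt (tsub_le_self) hctop
  set d := (c - c0).toReal with hddef
  have hd : 0 < d := ENNReal.toReal_pos hdpos.ne' hdtop.ne
  set kR := (k : ℝ) with hkRdef
  have hkR : 0 < kR := by rw [hkRdef]; exact_mod_cast hk
  set r := d / (2 * (kR + 1)) with hrdef
  have hrpos : 0 < r := by positivity
  have hrd : r * (2 * (kR + 1)) = d := div_mul_cancel₀ d (by positivity)
  -- the error budget
  have hbudget : (k : ℝ≥0∞) * ENNReal.ofReal r + (k : ℝ≥0∞) * ENNReal.ofReal r ≤ c - c0 := by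
    have h1 : (k : ℝ≥0∞) * ENNReal.ofReal r = ENNReal.ofReal (kR * r) := by
      rw [ENNReal.ofReal_mul hkR.le, ENNReal.ofReal_natCast]
    rw [h1, ← ENNReal.ofReal_add (by positivity) (by positivity)]
    have h2 : kR * r + kR * r ≤ d := by nlinarith [hrpos.le]
    calc ENNReal.ofReal (kR * r + kR * r) ≤ ENNReal.ofReal d := ENNReal.ofReal_le_ofReal h2
      _ = c - c0 := ENNReal.ofReal_toReal hdtop.ne
  -- separation machinery
  have sep := fun (ρ : ℝ) (hρ : 0 < ρ) => separation_lemma hc hi hρ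
  choose! E hEpos hE using sep
  set σ : ℕ → ℝ := fun j => Nat.rec r (fun _ x => min x (E x)) j with hσdef
  have hσ0 : σ 0 = r := rfl
  have hσsucc : ∀ j, σ (j+1) = min (σ j) (E (σ j)) := fun j => rfl
  have hσpos : ∀ j, 0 < σ j := by
    intro j
    induction j with
    | zero => exact hrpos
    | succ j ihj => rw [hσsucc]; exact lt_min ihj (hEpos _ ihj)
  have hσanti : Antitone σ := by
    apply antitone_nat_of_succ_le
    intro j
    rw [hσsucc]
    exact min_le_left _ _
  have hσr : ∀ j, σ j ≤ r := fun j => hσ0 ▸ hσanti (Nat.zero_le j)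
  refine ⟨σ (k - 1), hσpos _, fun ε hε hεe γ2 hc2 hi2 hsub2 hm0 hm1 => ?_⟩
  -- reparametrize so that γ 0 comes before γ 1
  obtain ⟨g, a, b, hcg, hig, hgimg, ha01, hb01, hab, hga, hgb⟩ :=
    reparam_ordered hc2 hi2 hm0 hm1
  have hgsub : g '' Icc 0 1 ⊆ cthickening ε (γ '' Icc 0 1) := hgimg ▸ hsub2
  have hIccab : Icc a b ⊆ Icc (0:ℝ) 1 := Icc_subset_Icc ha01.1 hb01.2
  -- the inductive hitting-time construction
  have key : ∀ i : ℕ, i ≤ k - 1 →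
      ∃ s : ℕ → ℝ, Monotone s ∧ (∀ j, s j ∈ Icc a b) ∧ s 0 = a ∧
        (∀ j, j ≤ i → dist (g (s j)) (γ (t j)) ≤ if j = 0 then 0 else σ (k - 1 - j)) := by
    intro i
    induction i with
    | zero =>
      intro _
      refine ⟨fun _ => a, monotone_const, fun _ => ⟨le_rfl, hab⟩, rfl, ?_⟩
      intro j hj
      interval_cases j
      rw [if_pos rfl, ht0, hga]
      simp
    | succ i ih =>
      intro hik
      obtain ⟨s, hsm, hsmem, hs0, hsd⟩ := ih (by omega)
      set ρ := σ (k - 1 - (i+1)) with hρdef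
      have hρpos : 0 < ρ := hσpos _
      have hidx : k - 1 - i = (k - 1 - (i+1)) + 1 := by omega
      have hEρ : σ (k - 1 - i) ≤ E ρ := by
        rw [hidx, hσsucc]
        exact min_le_right _ _
      have hεE : ε ≤ E ρ := by
        refine le_trans hεe (le_trans (hσanti ?_) hEρ)
        omega
      set K := g '' Icc (s i) b with hKdef
      have hKsubIcc : Icc (s i) b ⊆ Icc (0:ℝ) 1 := fun x hx =>
        ⟨le_trans (le_trans ha01.1 (hsmem i).1) hx.1, le_trans hx.2 hb01.2⟩
      have hKconn : IsPreconnected K :=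
        (isPreconnected_Icc).image g (hcg.mono hKsubIcc)
      have hKsub : K ⊆ cthickening ε (γ '' Icc 0 1) :=
        subset_trans (image_mono (fun x hx => hIccab ⟨le_trans (hsmem i).1 hx.1, hx.2⟩)) hgsub
      have hyuK : g (s i) ∈ K := ⟨s i, ⟨le_rfl, (hsmem i).2⟩, rfl⟩
      have hyvK : g b ∈ K := ⟨b, ⟨(hsmem i).2, le_rfl⟩, rfl⟩
      have hyud : dist (g (s i)) (γ (t i)) ≤ E ρ := by
        refine le_trans (hsd i le_rfl) ?_
        by_cases h0 : i = 0
        · rw [if_pos h0]; exact (hEpos _ hρpos).le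
        · rw [if_neg h0]
          exact hEρ
      have hyvd : dist (g b) (γ 1) ≤ E ρ := by
        rw [hgb, dist_self]
        exact (hEpos _ hρpos).le
      obtain ⟨y, hyK, hyd⟩ := hE ρ hρpos ε hε hεE K hKconn hKsub
        (t i) (t (i+1)) 1 (htmem i) (htmem (i+1)) ⟨zero_le_one, le_rfl⟩
        (htmono (Nat.le_succ i)) (htmem (i+1)).2
        (g (s i)) hyuK (g b) hyvK hyud hyvd
      obtain ⟨s', hs'mem, rfl⟩ := hyK
      refine ⟨fun j => if j ≤ i then s j else s', ?_, ?_, ?_, ?_⟩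
      · intro x y hxy
        by_cases hx : x ≤ i <;> by_cases hy : y ≤ i
        · simp only [if_pos hx, if_pos hy]; exact hsm hxy
        · simp only [if_pos hx, if_neg hy]
          exact le_trans (hsm (show x ≤ i from hx)) hs'mem.1
        · omega
        · simp only [if_neg hx, if_neg hy]; exact le_rfl
      · intro j
        by_cases hj : j ≤ i
        · simp only [if_pos hj]; exact hsmem j
        · simp only [if_neg hj]
          exact ⟨le_trans (hsmem i).1 hs'mem.1, hs'mem.2⟩
      · simp only [if_pos (Nat.zero_le i)]; exact hs0
      · intro j hj
        by_cases hjle : j ≤ i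
        · simp only [if_pos hjle]; exact hsd j hjle
        · have hjeq : j = i + 1 := by omega
          simp only [if_neg hjle]
          subst hjeq
          rw [if_neg (by omega)]
          exact hyd
  obtain ⟨s, hsm, hsmem, hs0, hsd⟩ := key (k - 1) le_rfl
  -- extend hitting sequence by b at the top
  set s3 : ℕ → ℝ := fun j => if j ≤ k - 1 then s j else b with hs3def
  have hs3mono : Monotone s3 := by
    intro x y hxy
    by_cases hx : x ≤ k - 1 <;> by_cases hy : y ≤ k - 1
    · simp only [s3, if_pos hx, if_pos hy]; exact hsm hxy
    · simp only [s3, if_pos hx, if_neg hy]; exact (hsmem x).2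
    · omega
    · simp only [s3, if_neg hx, if_neg hy]; exact le_rfl
  have hs3mem : ∀ j, s3 j ∈ Icc (0:ℝ) 1 := by
    intro j
    by_cases hj : j ≤ k - 1
    · simp only [s3, if_pos hj]; exact hIccab (hsmem j)
    · simp only [s3, if_neg hj]; exact hb01
  have hs3d : ∀ j, j ≤ k → dist (g (s3 j)) (γ (t j)) ≤ r := by
    intro j hj
    by_cases hjle : j ≤ k - 1
    · simp only [s3, if_pos hjle]
      refine le_trans (hsd j hjle) ?_
      by_cases h0 : j = 0
      · rw [if_pos h0]; exact hrpos.le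
      · rw [if_neg h0]; exact hσr _
    · have hjk : j = k := by omega
      simp only [s3, if_neg hjle]
      rw [hjk, htend k le_rfl, hgb, dist_self]
      exact hrpos.le
  -- chord sum comparison
  have hchord : ∑ j ∈ Finset.range k, edist (g (s3 j)) (g (s3 (j+1))) ≤
      μH[1] (g '' Icc 0 1) := chordsum_le_hausdorff hcg hig hs3mono hs3mem k
  have hcompare : ∀ j ∈ Finset.range k, edist (γ (t j)) (γ (t (j+1))) ≤
      ENNReal.ofReal r + edist (g (s3 j)) (g (s3 (j+1))) + ENNReal.ofReal r := by
    intro j hj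
    rw [Finset.mem_range] at hj
    have h1 : edist (γ (t j)) (g (s3 j)) ≤ ENNReal.ofReal r := by
      rw [edist_dist, dist_comm]
      exact ENNReal.ofReal_le_ofReal (hs3d j (by omega))
    have h2 : edist (g (s3 (j+1))) (γ (t (j+1))) ≤ ENNReal.ofReal r := by
      rw [edist_dist]
      exact ENNReal.ofReal_le_ofReal (hs3d (j+1) (by omega))
    calc edist (γ (t j)) (γ (t (j+1)))
        ≤ edist (γ (t j)) (g (s3 j)) + edist (g (s3 j)) (g (s3 (j+1)))
          + edist (g (s3 (j+1))) (γ (t (j+1))) := edist_triangle4 _ _ _ _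
      _ ≤ ENNReal.ofReal r + edist (g (s3 j)) (g (s3 (j+1))) + ENNReal.ofReal r := by
          gcongr
  have hsum2 : c < (k : ℝ≥0∞) * ENNReal.ofReal r + μH[1] (g '' Icc 0 1)
      + (k : ℝ≥0∞) * ENNReal.ofReal r := by
    refine lt_of_lt_of_le hbig ?_
    calc ∑ j ∈ Finset.range k, edist (γ (t j)) (γ (t (j+1)))
        ≤ ∑ j ∈ Finset.range k,
            (ENNReal.ofReal r + edist (g (s3 j)) (g (s3 (j+1))) + ENNReal.ofReal r) :=
          Finset.sum_le_sum hcompare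
      _ = (k : ℝ≥0∞) * ENNReal.ofReal r
            + ∑ j ∈ Finset.range k, edist (g (s3 j)) (g (s3 (j+1)))
            + (k : ℝ≥0∞) * ENNReal.ofReal r := by
          rw [Finset.sum_add_distrib, Finset.sum_add_distrib, Finset.sum_const,
            Finset.card_range, nsmul_eq_mul]
      _ ≤ (k : ℝ≥0∞) * ENNReal.ofReal r + μH[1] (g '' Icc 0 1)
            + (k : ℝ≥0∞) * ENNReal.ofReal r := by gcongr
  rw [hgimg] at hsum2
  by_contra hcon
  push_neg at hcon
  have : c < c0 + (c - c0) := by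
    refine lt_of_lt_of_le hsum2 ?_
    calc (k : ℝ≥0∞) * ENNReal.ofReal r + μH[1] (γ2 '' Icc 0 1) + (k : ℝ≥0∞) * ENNReal.ofReal r
        ≤ (k : ℝ≥0∞) * ENNReal.ofReal r + c0 + (k : ℝ≥0∞) * ENNReal.ofReal r := by gcongr
      _ = c0 + ((k : ℝ≥0∞) * ENNReal.ofReal r + (k : ℝ≥0∞) * ENNReal.ofReal r) := by ring
      _ ≤ c0 + (c - c0) := by gcongr
  rw [add_tsub_cancel_of_le hc0c.le] at this
  exact lt_irrefl c this


theorem length_of_sausage_approx {n : ℕ}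
    (γ : ℝ → EuclideanSpace ℝ (Fin n))
    (hc : ContinuousOn γ (Icc 0 1)) (hi : InjOn γ (Icc 0 1))
    (Γ : Set (EuclideanSpace ℝ (Fin n))) (hΓ : Γ = γ '' Icc 0 1)
    (hrect : μH[1] Γ < ⊤) :
    Tendsto
      (fun ε : ℝ =>
        sInf { L : ℝ≥0∞ | ∃ Γ' : Set (EuclideanSpace ℝ (Fin n)),
          IsSimpleRectifiableCurve Γ' ∧ Γ' ⊆ cthickening ε Γ ∧
          γ 0 ∈ Γ' ∧ γ 1 ∈ Γ' ∧ L = μH[1] Γ' })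
      (nhdsWithin 0 (Ioi 0)) (nhds (μH[1] Γ)) := by
  subst hΓ
  rw [tendsto_order]
  constructor
  · intro a ha
    obtain ⟨c1, hac1, hc1L⟩ := exists_between ha
    obtain ⟨e, he, hlow⟩ := lower_bound hc hi hc1L
    filter_upwards [Ioc_mem_nhdsGT he] with ε hε
    refine lt_of_lt_of_le hac1 (le_sInf ?_)
    rintro L' ⟨Γ', ⟨⟨γ2, hc2, hi2, himg2⟩, hfin2⟩, hsub', hm0, hm1, rfl⟩
    subst himg2
    exact (hlow ε hε.1 hε.2 γ2 hc2 hi2 hsub' hm0 hm1).le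
  · intro a ha
    filter_upwards [self_mem_nhdsWithin] with ε hε
    refine lt_of_le_of_lt (sInf_le ?_) ha
    exact ⟨γ '' Icc 0 1, ⟨⟨γ, hc, hi, rfl⟩, hrect⟩, self_subset_cthickening _,
      ⟨0, ⟨le_rfl, zero_le_one⟩, rfl⟩, ⟨1, ⟨zero_le_one, le_rfl⟩, rfl⟩, rfl⟩
end

section
/- Let S be a finite set of points in ℝⁿ sampled from a connected set Γ with the property that 2·d_H(Γ, S) ≤ ε. If T is a Euclidean spanning tree of S containing an edge of length greater than 4ε, then T is not a minimum spanning tree: there exists another spanning tree of S with strictly smaller total edge length. -/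
open Set Metric MeasureTheory ENNReal Classical

-- Lemma A: removing an edge from the double sum
lemma sum_adj_delete {V : Type*} [Fintype V] (d : V → V → ℝ)
    (hd : ∀ x y, d x y = d y x) (G : SimpleGraph V) {p q : V} (h : G.Adj p q) :
    ∑ x : V, ∑ y : V, (if G.Adj x y then d x y else 0)
      = (∑ x : V, ∑ y : V,
          (if (G \ SimpleGraph.fromEdgeSet {s(p,q)}).Adj x y then d x y else 0))
        + 2 * d p q := by
  have hpq : p ≠ q := h.ne
  have key : ∀ x y : V, (if G.Adj x y then d x y else 0)
      = (if (G \ SimpleGraph.fromEdgeSet {s(p,q)}).Adj x y then d x y else 0)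
        + ((if x = p ∧ y = q then d x y else 0) + (if x = q ∧ y = p then d x y else 0)) := by
    intro x y
    have hadj : (G \ SimpleGraph.fromEdgeSet {s(p,q)}).Adj x y
        ↔ G.Adj x y ∧ ¬ s(x,y) = s(p,q) := by
      simp only [SimpleGraph.sdiff_adj, SimpleGraph.fromEdgeSet_adj, Set.mem_singleton_iff]
      constructor
      · rintro ⟨h1, h2⟩; exact ⟨h1, fun he => h2 ⟨he, h1.ne⟩⟩
      · rintro ⟨h1, h2⟩; exact ⟨h1, fun he => h2 he.1⟩
    by_cases h1 : s(x,y) = s(p,q)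
    · rw [Sym2.eq_iff] at h1
      rcases h1 with ⟨rfl, rfl⟩ | ⟨rfl, rfl⟩
      · simp [hadj, h, hpq, Ne.symm hpq]
      · simp [hadj, h.symm, hpq, Ne.symm hpq, Sym2.eq_swap]
    · have h2 : ¬ (x = p ∧ y = q) := by
        rintro ⟨rfl, rfl⟩; exact h1 rfl
      have h3 : ¬ (x = q ∧ y = p) := by
        rintro ⟨rfl, rfl⟩; exact h1 (Sym2.eq_swap)
      simp only [h2, h3, if_neg, if_false, add_zero]
      by_cases hA : G.Adj x y
      · simp [hA, hadj, h1]
      · simp [hA, hadj]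
  have e1 : ∀ (c cc : V), (∑ x : V, ∑ y : V, (if x = c ∧ y = cc then d x y else 0)) = d c cc := by
    intro c cc
    rw [Finset.sum_eq_single c]
    · rw [Finset.sum_eq_single cc]
      · simp
      · intro b _ hb; simp [hb]
      · simp
    · intro b _ hb; apply Finset.sum_eq_zero; intro y _; simp [hb]
    · simp
  calc ∑ x : V, ∑ y : V, (if G.Adj x y then d x y else 0)
      = ∑ x : V, ∑ y : V, ((if (G \ SimpleGraph.fromEdgeSet {s(p,q)}).Adj x y then d x y else 0)
        + ((if x = p ∧ y = q then d x y else 0) + (if x = q ∧ y = p then d x y else 0))) := by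
        simp only [key]
    _ = (∑ x : V, ∑ y : V,
          (if (G \ SimpleGraph.fromEdgeSet {s(p,q)}).Adj x y then d x y else 0))
        + ((∑ x : V, ∑ y : V, (if x = p ∧ y = q then d x y else 0))
          + (∑ x : V, ∑ y : V, (if x = q ∧ y = p then d x y else 0))) := by
        simp [Finset.sum_add_distrib]
    _ = _ := by rw [e1, e1, hd q p]; ring

-- Lemma B: covering by the two components
lemma reach_cover {V : Type*} {T : SimpleGraph V} (hconn : T.Connected)
    (u v : V) (w : V) :
    (T \ SimpleGraph.fromEdgeSet {s(u,v)}).Reachable u w ∨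
      (T \ SimpleGraph.fromEdgeSet {s(u,v)}).Reachable v w := by
  set G' := T \ SimpleGraph.fromEdgeSet {s(u,v)} with hG'
  have main : ∀ (a b : V) (_ : T.Walk a b),
      (G'.Reachable u b ∨ G'.Reachable v b) → (G'.Reachable u a ∨ G'.Reachable v a) := by
    intro a b p
    induction p with
    | nil => exact id
    | @cons a x b hadj q ih =>
      intro hb
      have hx := ih hb
      by_cases h1 : s(a, x) = s(u, v)
      · rw [Sym2.eq_iff] at h1
        rcases h1 with ⟨h1a, h1b⟩ | ⟨h1a, h1b⟩
        · exact Or.inl (by rw [h1a])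
        · exact Or.inr (by rw [h1a])
      · have hadj' : G'.Adj a x := by
          simp only [hG', SimpleGraph.sdiff_adj, SimpleGraph.fromEdgeSet_adj,
            Set.mem_singleton_iff]
          exact ⟨hadj, fun hc => h1 hc.1⟩
        exact hx.imp (fun hr => hr.trans hadj'.symm.reachable)
          (fun hr => hr.trans hadj'.symm.reachable)
  obtain ⟨p⟩ := hconn w u
  exact main w u p (Or.inl (SimpleGraph.Reachable.refl u))

/-- Total Euclidean edge length of a graph on points of `ℝⁿ`. -/
noncomputable def graphWeight {V : Type*} [Fintype V] {n : ℕ}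
    (pos : V → EuclideanSpace ℝ (Fin n)) (T : SimpleGraph V) : ℝ :=
  (1 / 2) * ∑ u : V, ∑ v : V, if T.Adj u v then dist (pos u) (pos v) else 0

/-- A spanning tree of the complete graph on the vertex set. -/
def IsSpanningTree {V : Type*} (T : SimpleGraph V) : Prop :=
  T.Connected ∧ T.IsAcyclic

theorem long_edge_not_mst {n : ℕ} (V : Type*) [Fintype V] [Nonempty V]
    (pos : V → EuclideanSpace ℝ (Fin n)) (hpos : Function.Injective pos)
    (Γ : Set (EuclideanSpace ℝ (Fin n))) (hΓconn : IsConnected Γ)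
    (ε : ℝ) (hε : 0 < ε)
    (hclose : EMetric.hausdorffEdist Γ (Set.range pos) ≤ ENNReal.ofReal (ε / 2))
    (T : SimpleGraph V) (hT : IsSpanningTree T)
    (hedge : ∃ u v : V, T.Adj u v ∧ dist (pos u) (pos v) > 4 * ε) :
    ∃ T' : SimpleGraph V, IsSpanningTree T' ∧ graphWeight pos T' < graphWeight pos T := by
  obtain ⟨u, v, huv, hlong⟩ := hedge
  set G' := T \ SimpleGraph.fromEdgeSet {s(u,v)} with hG'def
  have hbridge : ¬ G'.Reachable u v := by
    have hbr := (SimpleGraph.isAcyclic_iff_forall_adj_isBridge.mp hT.2) huv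
    rw [SimpleGraph.isBridge_iff] at hbr
    exact hbr
  -- every point of Γ has a sample point within ε/2
  have hS : ∀ γ ∈ Γ, ∃ w : V, dist γ (pos w) ≤ ε / 2 := by
    intro γ hγ
    have h1 : EMetric.infEdist γ (Set.range pos) ≤ ENNReal.ofReal (ε / 2) :=
      le_trans (EMetric.infEdist_le_hausdorffEdist_of_mem hγ) hclose
    have hne : (Set.range pos).Nonempty := Set.range_nonempty pos
    have hcpt : IsCompact (Set.range pos) := (Set.finite_range pos).isCompact
    obtain ⟨y, hy, hyd⟩ := hcpt.exists_infDist_eq_dist hne γ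
    obtain ⟨w, rfl⟩ := hy
    refine ⟨w, ?_⟩
    rw [← hyd]
    calc infDist γ (Set.range pos) = (EMetric.infEdist γ (Set.range pos)).toReal := rfl
      _ ≤ (ENNReal.ofReal (ε / 2)).toReal := ENNReal.toReal_mono ofReal_ne_top h1
      _ = ε / 2 := ENNReal.toReal_ofReal (by linarith)
  -- every sample point has a point of Γ within ε
  have hΓnear : ∀ w : V, ∃ γ ∈ Γ, dist (pos w) γ < ε := by
    intro w
    have h1 : EMetric.infEdist (pos w) Γ ≤ ENNReal.ofReal (ε / 2) := by
      refine le_trans (EMetric.infEdist_le_hausdorffEdist_of_mem (Set.mem_range_self w)) ?_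
      rw [EMetric.hausdorffEdist_comm]; exact hclose
    have h2 : EMetric.infEdist (pos w) Γ < ENNReal.ofReal ε :=
      lt_of_le_of_lt h1 (by rw [ENNReal.ofReal_lt_ofReal_iff hε]; linarith)
    obtain ⟨γ, hγ, hlt⟩ := EMetric.infEdist_lt_iff.mp h2
    exact ⟨γ, hγ, by rwa [← edist_lt_ofReal]⟩
  -- find a short pair between the two components
  have hab : ∃ a b : V, G'.Reachable u a ∧ G'.Reachable v b ∧
      dist (pos a) (pos b) ≤ 2 * ε := by
    by_contra hno
    push_neg at hno
    set S₁ : Set (EuclideanSpace ℝ (Fin n)) := pos '' {w | G'.Reachable u w} with hS₁def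
    set S₂ : Set (EuclideanSpace ℝ (Fin n)) := pos '' {w | G'.Reachable v w} with hS₂def
    have hS₁ne : S₁.Nonempty := ⟨pos u, Set.mem_image_of_mem pos (SimpleGraph.Reachable.refl u)⟩
    have hS₂ne : S₂.Nonempty := ⟨pos v, Set.mem_image_of_mem pos (SimpleGraph.Reachable.refl v)⟩
    have hS₁cpt : IsCompact S₁ := (((Set.finite_univ (α := V)).subset (Set.subset_univ _)).image pos).isCompact
    have hS₂cpt : IsCompact S₂ := (((Set.finite_univ (α := V)).subset (Set.subset_univ _)).image pos).isCompact
    set C1 : Set (EuclideanSpace ℝ (Fin n)) := {x | infDist x S₁ ≤ ε / 2} with hC1def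
    set C2 : Set (EuclideanSpace ℝ (Fin n)) := {x | infDist x S₂ ≤ ε / 2} with hC2def
    have hC1closed : IsClosed C1 := isClosed_le (continuous_infDist_pt _) continuous_const
    have hC2closed : IsClosed C2 := isClosed_le (continuous_infDist_pt _) continuous_const
    have hcover : Γ ⊆ C1 ∪ C2 := by
      intro γ hγ
      obtain ⟨w, hw⟩ := hS γ hγ
      rcases reach_cover hT.1 u v w with h | h
      · exact Or.inl (le_trans (infDist_le_dist_of_mem (Set.mem_image_of_mem pos h)) hw)
      · exact Or.inr (le_trans (infDist_le_dist_of_mem (Set.mem_image_of_mem pos h)) hw)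
    have hne1 : (Γ ∩ C1).Nonempty := by
      obtain ⟨γ, hγ, hd⟩ := hΓnear u
      obtain ⟨w, hw⟩ := hS γ hγ
      rcases reach_cover hT.1 u v w with h | h
      · exact ⟨γ, hγ, le_trans (infDist_le_dist_of_mem (Set.mem_image_of_mem pos h)) hw⟩
      · exfalso
        have hd2 : dist (pos u) (pos w) ≤ 2 * ε := by
          calc dist (pos u) (pos w) ≤ dist (pos u) γ + dist γ (pos w) := dist_triangle _ _ _
            _ ≤ 2 * ε := by linarith
        exact absurd hd2 (not_le.mpr (hno u w (SimpleGraph.Reachable.refl u) h))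
    have hne2 : (Γ ∩ C2).Nonempty := by
      obtain ⟨γ, hγ, hd⟩ := hΓnear v
      obtain ⟨w, hw⟩ := hS γ hγ
      rcases reach_cover hT.1 u v w with h | h
      · exfalso
        have hd2 : dist (pos w) (pos v) ≤ 2 * ε := by
          calc dist (pos w) (pos v) ≤ dist (pos w) γ + dist γ (pos v) := dist_triangle _ _ _
            _ = dist γ (pos w) + dist (pos v) γ := by rw [dist_comm (pos w) γ, dist_comm γ (pos v)]
            _ ≤ 2 * ε := by linarith
        exact absurd hd2 (not_le.mpr (hno w v h (SimpleGraph.Reachable.refl v)))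
      · exact ⟨γ, hγ, le_trans (infDist_le_dist_of_mem (Set.mem_image_of_mem pos h)) hw⟩
    obtain ⟨γ, hγΓ, hγ1, hγ2⟩ := isPreconnected_closed_iff.mp hΓconn.isPreconnected
      C1 C2 hC1closed hC2closed hcover hne1 hne2
    obtain ⟨y1, hy1, hyd1⟩ := hS₁cpt.exists_infDist_eq_dist hS₁ne γ
    obtain ⟨a, ha, rfl⟩ := hy1
    obtain ⟨y2, hy2, hyd2⟩ := hS₂cpt.exists_infDist_eq_dist hS₂ne γ
    obtain ⟨b, hb, rfl⟩ := hy2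
    have hda : dist γ (pos a) ≤ ε / 2 := by rw [← hyd1]; exact hγ1
    have hdb : dist γ (pos b) ≤ ε / 2 := by rw [← hyd2]; exact hγ2
    have : dist (pos a) (pos b) ≤ 2 * ε := by
      calc dist (pos a) (pos b) ≤ dist (pos a) γ + dist γ (pos b) := dist_triangle _ _ _
        _ = dist γ (pos a) + dist γ (pos b) := by rw [dist_comm]
        _ ≤ 2 * ε := by linarith
    exact absurd this (not_le.mpr (hno a b ha hb))
  obtain ⟨a, b, hra, hrb, hdab⟩ := hab
  have hdablt : dist (pos a) (pos b) < dist (pos u) (pos v) := by linarith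
  have hne_ab : a ≠ b := by
    rintro rfl
    exact hbridge (hra.trans hrb.symm)
  have hnadj : ¬ G'.Adj a b := fun h => hbridge (hra.trans (h.reachable.trans hrb.symm))
  set T'' := G' ⊔ SimpleGraph.fromEdgeSet {s(a,b)} with hT''def
  clear_value T''
  have hT''adj : T''.Adj a b := by
    simp [hT''def, hne_ab]
  have hdel : T'' \ SimpleGraph.fromEdgeSet {s(a,b)} = G' := by
    ext x y
    simp only [hT''def, SimpleGraph.sdiff_adj, SimpleGraph.sup_adj,
      SimpleGraph.fromEdgeSet_adj, Set.mem_singleton_iff]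
    constructor
    · rintro ⟨h1 | h1, h2⟩
      · exact h1
      · exact absurd h1 h2
    · intro h1
      refine ⟨Or.inl h1, ?_⟩
      rintro ⟨he, -⟩
      rw [Sym2.eq_iff] at he
      rcases he with ⟨rfl, rfl⟩ | ⟨rfl, rfl⟩
      · exact hnadj h1
      · exact hnadj h1.symm
  have hG'le : G' ≤ T'' := by rw [hT''def]; exact le_sup_left
  have huv'' : T''.Reachable u v :=
    ((hra.mono hG'le).trans hT''adj.reachable).trans (hrb.mono hG'le).symm
  have hconn'' : T''.Connected := by
    rw [SimpleGraph.connected_iff]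
    refine ⟨fun x y => ?_, ‹Nonempty V›⟩
    have hx : T''.Reachable u x := by
      rcases reach_cover hT.1 u v x with h | h
      · exact h.mono hG'le
      · exact huv''.trans (h.mono hG'le)
    have hy : T''.Reachable u y := by
      rcases reach_cover hT.1 u v y with h | h
      · exact h.mono hG'le
      · exact huv''.trans (h.mono hG'le)
    exact hx.symm.trans hy
  have hacyc : T''.IsAcyclic := by
    intro x c hc
    by_cases he : s(a,b) ∈ c.edges
    · have hbr : T''.IsBridge s(a,b) := by
        rw [SimpleGraph.isBridge_iff]
        show ¬ (T'' \ SimpleGraph.fromEdgeSet {s(a,b)}).Reachable a b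
        rw [show T'' \ SimpleGraph.fromEdgeSet {s(a,b)} = G' from hdel]
        intro hr
        exact hbridge (hra.trans (hr.trans hrb.symm))
      exact hbr.notMem_edges_of_isCycle hc he
    · have hsub : ∀ e ∈ c.edges, e ∈ T.edgeSet := by
        intro e hee
        have h1 : e ∈ T''.edgeSet := c.edges_subset_edgeSet hee
        rw [hT''def, SimpleGraph.edgeSet_sup] at h1
        rcases h1 with h1 | h1
        · exact SimpleGraph.edgeSet_mono (sdiff_le) h1
        · rw [SimpleGraph.edgeSet_fromEdgeSet] at h1
          obtain ⟨h1a, -⟩ := h1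
          rw [Set.mem_singleton_iff] at h1a
          exact absurd (h1a ▸ hee) he
      exact hT.2 (c.transfer T hsub) (hc.transfer hsub)
  have hw1 : ∑ x : V, ∑ y : V, (if T.Adj x y then dist (pos x) (pos y) else 0)
      = (∑ x : V, ∑ y : V, (if G'.Adj x y then dist (pos x) (pos y) else 0))
        + 2 * dist (pos u) (pos v) :=
    sum_adj_delete (fun x y => dist (pos x) (pos y)) (fun x y => dist_comm _ _) T huv
  have hw2 : ∑ x : V, ∑ y : V, (if T''.Adj x y then dist (pos x) (pos y) else 0)
      = (∑ x : V, ∑ y : V, (if G'.Adj x y then dist (pos x) (pos y) else 0))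
        + 2 * dist (pos a) (pos b) := by
    have := sum_adj_delete (fun x y => dist (pos x) (pos y)) (fun x y => dist_comm _ _)
      T'' hT''adj
    simpa only [hdel] using this
  refine ⟨T'', ⟨hconn'', hacyc⟩, ?_⟩
  simp only [graphWeight]
  rw [hw1, hw2]
  nlinarith [dist_nonneg (x := pos a) (y := pos b)]
end

section
/- Let γ : [0,1] → ℝⁿ be continuous with image a simple rectifiable curve Γ (γ need not be injective), let γ̃ be an injective parametrization of Γ, and let 0 = a₀ < a₁ < ⋯ < a_m = 1 be a dissection. Let π be a permutation of {0,…,m} sorting the points γ(aᵢ) by their position along γ̃ (i.e., i < j implies γ̃^{−1}(γ(a_{π(i)})) ≤ γ̃^{−1}(γ(a_{π(j)}))). Then the polygonal curve connecting γ(a_{π(0)}), γ(a_{π(1)}), …, γ(a_{π(m)}) in order has length at most H¹(Γ). -/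
open Set MeasureTheory ENNReal

lemma edist_le_hausdorff_of_preconnected {X : Type*} [MetricSpace X]
    [MeasurableSpace X] [BorelSpace X] {s : Set X} (hs : IsPreconnected s)
    {x y : X} (hx : x ∈ s) (hy : y ∈ s) : edist x y ≤ μH[1] s := by
  have hf : LipschitzWith 1 (dist x) := LipschitzWith.dist_right x
  have himg : IsPreconnected ((dist x) '' s) :=
    hs.image _ (hf.continuous.continuousOn)
  have h0 : (0 : ℝ) ∈ (dist x) '' s := ⟨x, hx, dist_self x⟩
  have hd : dist x y ∈ (dist x) '' s := ⟨y, hy, rfl⟩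
  have hIcc : Icc (0 : ℝ) (dist x y) ⊆ (dist x) '' s := himg.Icc_subset h0 hd
  calc edist x y = ENNReal.ofReal (dist x y) := edist_dist x y
    _ = volume (Icc (0 : ℝ) (dist x y)) := by rw [Real.volume_Icc, sub_zero]
    _ ≤ volume ((dist x) '' s) := measure_mono hIcc
    _ = μH[1] ((dist x) '' s) := by rw [MeasureTheory.hausdorffMeasure_real]
    _ ≤ 1 ^ (1 : ℝ) * μH[1] s := by
        simpa using hf.hausdorffMeasure_image_le zero_le_one s
    _ = μH[1] s := by simp

theorem sorted_chord_sum_le_length {n : ℕ} {m : ℕ}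
    (γ : ℝ → EuclideanSpace ℝ (Fin n)) (hγ : ContinuousOn γ (Icc 0 1))
    (Γ : Set (EuclideanSpace ℝ (Fin n))) (hΓ : Γ = γ '' Icc 0 1)
    (γt : ℝ → EuclideanSpace ℝ (Fin n)) (hγtc : ContinuousOn γt (Icc 0 1))
    (hγti : InjOn γt (Icc 0 1)) (hγtim : γt '' Icc 0 1 = Γ)
    (hrect : μH[1] Γ < ⊤)
    (a : Fin (m + 1) → ℝ) (hmono : StrictMono a)
    (h0 : a 0 = 0) (h1 : a (Fin.last m) = 1)
    (π : Equiv.Perm (Fin (m + 1)))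
    (hsort : ∀ i j : Fin (m + 1), i < j →
      ∀ s ∈ Icc (0 : ℝ) 1, ∀ t ∈ Icc (0 : ℝ) 1,
        γt s = γ (a (π i)) → γt t = γ (a (π j)) → s ≤ t) :
    ENNReal.ofReal (∑ i : Fin m, dist (γ (a (π i.castSucc))) (γ (a (π i.succ))))
      ≤ μH[1] Γ := by
  -- each point lies on Γ, so choose preimages under γt
  have haI : ∀ i : Fin (m + 1), a i ∈ Icc (0 : ℝ) 1 := fun i =>
    ⟨h0 ▸ hmono.monotone (Fin.zero_le i), h1 ▸ hmono.monotone (Fin.le_last i)⟩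
  have hmem : ∀ i : Fin (m + 1), γ (a (π i)) ∈ γt '' Icc (0 : ℝ) 1 := fun i => by
    rw [hγtim, hΓ]; exact mem_image_of_mem γ (haI (π i))
  choose s hsI hseq using fun i => hmem i
  -- s is monotone
  have hsmono : Monotone s := by
    intro i j hij
    rcases eq_or_lt_of_le hij with rfl | h
    · exact le_refl _
    · exact hsort i j h (s i) (hsI i) (s j) (hsI j) (hseq i) (hseq j)
  -- the arcs
  set A : Fin m → Set (EuclideanSpace ℝ (Fin n)) :=
    fun i => γt '' Icc (s i.castSucc) (s i.succ) with hA
  have hsub : ∀ i : Fin m, Icc (s i.castSucc) (s i.succ) ⊆ Icc (0 : ℝ) 1 := fun i =>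
    Icc_subset_Icc (hsI i.castSucc).1 (hsI i.succ).2
  have hAΓ : ∀ i, A i ⊆ Γ := fun i => by
    rw [← hγtim]; exact image_mono (hsub i)
  -- edist bound per chord
  have key : ∀ i : Fin m,
      ENNReal.ofReal (dist (γ (a (π i.castSucc))) (γ (a (π i.succ)))) ≤ μH[1] (A i) := by
    intro i
    rw [← hseq i.castSucc, ← hseq i.succ, ← edist_dist]
    have hconn : IsPreconnected (A i) :=
      (isPreconnected_Icc).image _ (hγtc.mono (hsub i))
    refine edist_le_hausdorff_of_preconnected hconn ?_ ?_
    · exact mem_image_of_mem _ ⟨le_refl _, hsmono (Fin.castSucc_le_succ i)⟩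
    · exact mem_image_of_mem _ ⟨hsmono (Fin.castSucc_le_succ i), le_refl _⟩
  -- measurability and a.e. disjointness
  have hAmeas : ∀ i, MeasurableSet (A i) := fun i =>
    (isCompact_Icc.image_of_continuousOn (hγtc.mono (hsub i))).measurableSet
  haveI : NullSingletonClass (μH[1] : Measure (EuclideanSpace ℝ (Fin n))) :=
    MeasureTheory.Measure.nullSingletonClass_hausdorff _ one_pos
  have H : ∀ i j : Fin m, i < j → MeasureTheory.AEDisjoint μH[1] (A i) (A j) := by
    intro i j hlt
    have hinter : A i ∩ A j ⊆ γt '' (Icc (s j.castSucc) (s i.succ)) := by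
      rw [hA, ← Set.InjOn.image_inter hγti (hsub i) (hsub j)]
      apply image_mono
      rintro x ⟨⟨_, hx2⟩, ⟨hx3, _⟩⟩
      exact ⟨hx3, hx2⟩
    have hss : s i.succ ≤ s j.castSucc := by
      apply hsmono
      rw [Fin.le_def, Fin.val_succ, Fin.coe_castSucc]
      exact hlt
    have : γt '' (Icc (s j.castSucc) (s i.succ)) ⊆ {γt (s i.succ)} := by
      rintro _ ⟨x, ⟨hx1, hx2⟩, rfl⟩
      have : x = s i.succ := le_antisymm hx2 (le_trans hss hx1)
      simp [this]
    exact MeasureTheory.measure_mono_null (hinter.trans this) (measure_singleton _)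
  have hdisj : Pairwise (Function.onFun (MeasureTheory.AEDisjoint μH[1]) A) := by
    intro i j hij
    rcases Ne.lt_or_gt hij with hlt | hlt
    · exact H i j hlt
    · exact (H j i hlt).symm
  -- combine
  rw [ENNReal.ofReal_sum_of_nonneg (fun i _ => dist_nonneg)]
  calc (∑ i : Fin m, ENNReal.ofReal (dist (γ (a (π i.castSucc))) (γ (a (π i.succ)))))
      ≤ ∑ i : Fin m, μH[1] (A i) := Finset.sum_le_sum (fun i _ => key i)
    _ = ∑' i : Fin m, μH[1] (A i) := (tsum_fintype _).symm
    _ = μH[1] (⋃ i, A i) :=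
        (MeasureTheory.measure_iUnion₀ hdisj
          (fun i => (hAmeas i).nullMeasurableSet)).symm
    _ ≤ μH[1] Γ := measure_mono (iUnion_subset hAΓ)
end
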